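/- arXiv:2102.09523 — 5 statements merged into one kernel-verified Lean document; each statement's English description precedes it below -/
import Mathlib

section
/- With U(x) = -2 log(1 + |x|²/8), the integral over ℝ² of log|z| · e^{U(z)} dz equals 12π log 2. -/
open MeasureTheory Real

noncomputable def lap2 (u : EuclideanSpace ℝ (Fin 2) → ℝ) (x : EuclideanSpace ℝ (Fin 2)) : ℝ :=
  ∑ i : Fin 2, fderiv ℝ (fun y => fderiv ℝ u y (EuclideanSpace.single i 1)) x (EuclideanSpace.single i 1)

noncomputable def U2 (x : EuclideanSpace ℝ (Fin 2)) : ℝ := -2 * Real.log (1 + ‖x‖^2 / 8)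

set_option maxHeartbeats 1000000

section Aux
open Filter Set

noncomputable def Gfun (y : ℝ) : ℝ :=
  4 * Real.log y * (y^2/(8+y^2)) - 2 * Real.log (1 + y^2/8)

lemma expU_eq {y : ℝ} : Real.exp (-2 * Real.log (1 + y^2/8)) = ((1+y^2/8)^2)⁻¹ := by
  rw [show (-2:ℝ) * Real.log (1+y^2/8) = Real.log (((1+y^2/8)^2)⁻¹) by
    rw [Real.log_inv, Real.log_pow]; push_cast; ring]
  exact Real.exp_log (by positivity)

lemma Gderiv {y : ℝ} (hy : 0 < y) :
    HasDerivAt Gfun (y * (Real.log y * Real.exp (-2 * Real.log (1 + y^2/8)))) y := by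
  have h8 : (8:ℝ) + y^2 ≠ 0 := by positivity
  have hu : (0:ℝ) < 1 + y^2/8 := by positivity
  have h1 : HasDerivAt Real.log y⁻¹ y := Real.hasDerivAt_log hy.ne'
  have hnum : HasDerivAt (fun y:ℝ => y^2) (2*y) y := by simpa using hasDerivAt_pow 2 y
  have h2 := hnum.div (hnum.const_add 8) h8
  have h3 : HasDerivAt (fun y : ℝ => Real.log (1 + y^2/8)) ((2*y/8)/(1+y^2/8)) y := by
    simpa using ((hnum.div_const 8).const_add 1).log hu.ne'
  have H := ((h1.const_mul 4).mul h2).sub (h3.const_mul 2)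
  refine HasDerivAt.congr_deriv (f := Gfun) H ?_
  simp only [Pi.div_apply]
  rw [expU_eq]
  field_simp
  ring

lemma Gcont0 : ContinuousWithinAt Gfun (Set.Ici 0) 0 := by
  have h0 : Gfun 0 = 0 := by simp [Gfun]
  unfold ContinuousWithinAt
  rw [h0, ← Set.Ioi_insert, nhdsWithin_insert, tendsto_sup]
  constructor
  · simpa [h0] using (tendsto_pure_nhds Gfun 0)
  · have t1 : Tendsto (fun y : ℝ => Real.log y * y^2) (nhdsWithin 0 (Ioi 0)) (nhds 0) := by
      have := tendsto_log_mul_rpow_nhdsGT_zero (by norm_num : (0:ℝ) < 2)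
      simpa [Real.rpow_natCast] using this
    have t2 : Tendsto (fun y : ℝ => 4/(8+y^2)) (nhdsWithin 0 (Ioi 0)) (nhds (4/(8+0^2))) :=
      ((continuous_const.div (by fun_prop) (fun y => by positivity)).tendsto 0).mono_left
        nhdsWithin_le_nhds
    have t3 : Tendsto (fun y : ℝ => Real.log (1+y^2/8)) (nhdsWithin 0 (Ioi 0))
        (nhds (Real.log (1+0^2/8))) :=
      ((Real.continuousAt_log (by norm_num)).comp
        ((by fun_prop : Continuous fun y : ℝ => 1+y^2/8).continuousAt)).tendsto.mono_left
        nhdsWithin_le_nhds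
    have key := (t1.mul t2).sub (t3.const_mul 2)
    have hc : (0:ℝ)*(4/(8+0^2)) - 2*Real.log (1+0^2/8) = 0 := by norm_num
    rw [hc] at key
    exact key.congr (fun y => by unfold Gfun; ring)

lemma Gtop : Tendsto Gfun atTop (nhds (6 * Real.log 2)) := by
  have hinv : Tendsto (fun y : ℝ => 8/y^2) atTop (nhds 0) := by
    simpa [div_eq_mul_inv] using ((tendsto_pow_atTop (n := 2) (by norm_num)).inv_tendsto_atTop).const_mul (8:ℝ)
  have a1 : Tendsto (fun y : ℝ => Real.log (8/(8/y^2+1))) atTop (nhds (Real.log 8)) := by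
    have h : Tendsto (fun y : ℝ => 8/(8/y^2+1)) atTop (nhds 8) := by
      have h' : Tendsto (fun y : ℝ => (8:ℝ)/(8/y^2+1)) atTop (nhds (8/(0+1))) :=
        tendsto_const_nhds.div (hinv.add_const 1) (by norm_num)
      norm_num at h'; exact h'
    exact ((Real.continuousAt_log (by norm_num)).tendsto).comp h
  have a2 : Tendsto (fun y : ℝ => Real.log y/y^2 * (y^2/(8+y^2))) atTop (nhds 0) := by
    have f1 : Tendsto (fun y : ℝ => Real.log y/y^2) atTop (nhds 0) := by
      have := (isLittleO_log_rpow_atTop (by norm_num : (0:ℝ) < 2)).tendsto_div_nhds_zero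
      simpa [Real.rpow_natCast] using this
    have f2 : Tendsto (fun y : ℝ => y^2/(8+y^2)) atTop (nhds 1) := by
      have h : Tendsto (fun y : ℝ => 1/(8/y^2+1)) atTop (nhds 1) := by
        have h' : Tendsto (fun y : ℝ => (1:ℝ)/(8/y^2+1)) atTop (nhds (1/(0+1))) :=
          tendsto_const_nhds.div (hinv.add_const 1) (by norm_num)
        norm_num at h'; exact h'.congr (fun y => (one_div _).symm)
      refine h.congr' ?_
      filter_upwards [eventually_gt_atTop (0:ℝ)] with y hy
      have hy2 : y^2 ≠ 0 := by positivity
      field_simp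
    have := f1.mul f2
    rw [zero_mul] at this
    exact this
  have key : Tendsto (fun y : ℝ => 2 * Real.log (8/(8/y^2+1)) - 32 * (Real.log y/y^2 * (y^2/(8+y^2))))
      atTop (nhds (2 * Real.log 8 - 32 * 0)) := (a1.const_mul 2).sub (a2.const_mul 32)
  have h8 : (2:ℝ) * Real.log 8 - 32 * 0 = 6 * Real.log 2 := by
    rw [show (8:ℝ) = 2^3 by norm_num, Real.log_pow]; push_cast; ring
  rw [← h8]
  refine key.congr' ?_
  filter_upwards [eventually_gt_atTop (0:ℝ)] with y hy
  have hy2 : (0:ℝ) < y^2 := by positivity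
  have h8y : (0:ℝ) < 8 + y^2 := by positivity
  have e0 : 8/(8/y^2+1) = 8*y^2/(8+y^2) := by field_simp
  have e1 : Real.log (8*y^2/(8+y^2)) = Real.log 8 + 2*Real.log y - Real.log (8+y^2) := by
    rw [Real.log_div (by positivity) (by positivity),
      Real.log_mul (by norm_num) (by positivity), Real.log_pow]
    push_cast; ring
  have e2 : Real.log (1+y^2/8) = Real.log (8+y^2) - Real.log 8 := by
    rw [show (1:ℝ)+y^2/8 = (8+y^2)/8 by ring, Real.log_div (by positivity) (by norm_num)]
  unfold Gfun
  rw [e0, e1, e2]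
  field_simp
  ring

lemma g_integrable :
    IntegrableOn (fun y : ℝ => y * (Real.log y * Real.exp (-2 * Real.log (1 + y^2/8))))
      (Ioi 0) := by
  have hmeas : AEStronglyMeasurable
      (fun y : ℝ => y * (Real.log y * Real.exp (-2 * Real.log (1 + y^2/8)))) (volume) := by
    apply Measurable.aestronglyMeasurable
    exact measurable_id'.mul (Real.measurable_log.mul (Real.measurable_exp.comp
      ((Real.measurable_log.comp (((measurable_id'.pow_const 2).div_const 8).const_add
        1)).const_mul (-2))))
  rw [← Set.Ioc_union_Ioi_eq_Ioi (le_of_lt one_pos)]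
  apply IntegrableOn.union
  · -- bounded by 1 on Ioc 0 1
    apply Measure.integrableOn_of_bounded (M := 1) (by simp) hmeas
    filter_upwards [ae_restrict_mem measurableSet_Ioc] with y hy
    obtain ⟨hy0, hy1⟩ := hy
    have hlog : |Real.log y| ≤ y⁻¹ := by
      rw [abs_of_nonpos (Real.log_nonpos hy0.le hy1)]
      have := Real.log_le_sub_one_of_pos (inv_pos.mpr hy0)
      rw [← Real.log_inv]
      linarith [inv_pos.mpr hy0]
    have hexp : Real.exp (-2 * Real.log (1 + y^2/8)) ≤ 1 := by
      rw [expU_eq]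
      have h1 : (1:ℝ) ≤ (1+y^2/8)^2 := by nlinarith
      exact inv_le_one_of_one_le₀ h1
    have hexp0 : (0:ℝ) < Real.exp (-2 * Real.log (1 + y^2/8)) := Real.exp_pos _
    rw [norm_mul, norm_mul, Real.norm_eq_abs, Real.norm_eq_abs, Real.norm_eq_abs,
      abs_of_pos hy0, abs_of_pos hexp0]
    calc y * (|Real.log y| * Real.exp (-2 * Real.log (1 + y^2/8)))
        ≤ y * (y⁻¹ * 1) := by
          apply mul_le_mul_of_nonneg_left _ hy0.le
          exact mul_le_mul hlog hexp hexp0.le (by positivity)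
      _ = 1 := by field_simp
  · -- bounded by 64 * y⁻² on Ioi 1
    apply Integrable.mono' ((integrableOn_Ioi_rpow_of_lt (by norm_num : (-2:ℝ) < -1)
      one_pos).const_mul 64) hmeas.restrict
    filter_upwards [ae_restrict_mem measurableSet_Ioi] with y hy
    have hy1 : (1:ℝ) < y := hy
    have hy0 : (0:ℝ) < y := lt_trans one_pos hy1
    have hrw : (64:ℝ) * y ^ (-2:ℝ) = 64 * (y^2)⁻¹ := by
      rw [show (-2:ℝ) = -(2:ℕ) by norm_num, Real.rpow_neg hy0.le, Real.rpow_natCast]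
    rw [hrw]
    have hlog0 : (0:ℝ) ≤ Real.log y := Real.log_nonneg hy1.le
    have hlogy : Real.log y ≤ y := by
      have := Real.log_le_sub_one_of_pos hy0; linarith
    have hexp0 : (0:ℝ) < Real.exp (-2 * Real.log (1 + y^2/8)) := Real.exp_pos _
    rw [norm_mul, norm_mul, Real.norm_eq_abs, Real.norm_eq_abs, Real.norm_eq_abs,
      abs_of_pos hy0, abs_of_nonneg hlog0, abs_of_pos hexp0, expU_eq]
    have hA : (0:ℝ) < (1+y^2/8)^2 := by positivity
    rw [show y * (Real.log y * ((1+y^2/8)^2)⁻¹) = y * Real.log y/((1+y^2/8)^2) by ring,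
      show (64:ℝ)*(y^2)⁻¹ = 64/y^2 by ring, div_le_div_iff₀ hA (by positivity)]
    nlinarith [mul_le_mul_of_nonneg_left hlogy (by positivity : (0:ℝ) ≤ y^3), sq_nonneg y,
      sq_nonneg (y^2)]

lemma integral_radial :
    ∫ y in Ioi (0:ℝ), y * (Real.log y * Real.exp (-2 * Real.log (1 + y^2/8)))
      = 6 * Real.log 2 := by
  have h := integral_Ioi_of_hasDerivAt_of_tendsto Gcont0 (fun x hx => Gderiv hx)
    g_integrable Gtop
  simpa [Gfun] using h

end Aux

theorem integral_log_mul_expU :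
    ∫ z : EuclideanSpace ℝ (Fin 2), Real.log ‖z‖ * Real.exp (U2 z) = 12 * π * Real.log 2 := by
  have key := MeasureTheory.integral_fun_norm_addHaar
    (volume : Measure (EuclideanSpace ℝ (Fin 2)))
    (fun t : ℝ => Real.log t * Real.exp (-2 * Real.log (1 + t^2/8)))
  rw [finrank_euclideanSpace_fin] at key
  have hball : (volume (Metric.ball (0:EuclideanSpace ℝ (Fin 2)) 1)).toReal = π := by
    rw [EuclideanSpace.volume_ball]
    rw [show (Fintype.card (Fin 2) : ℝ)/2 + 1 = 2 by simp; norm_num]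
    rw [Real.Gamma_two]
    simp [Real.sq_sqrt Real.pi_nonneg, ENNReal.toReal_ofReal Real.pi_nonneg]
  rw [measureReal_def, hball] at key
  simp only [show (2:ℕ)-1 = 1 from rfl, pow_one, smul_eq_mul, nsmul_eq_mul, Nat.cast_ofNat] at key
  have : (∫ z : EuclideanSpace ℝ (Fin 2), Real.log ‖z‖ * Real.exp (U2 z))
      = ∫ z : EuclideanSpace ℝ (Fin 2),
        Real.log ‖z‖ * Real.exp (-2 * Real.log (1 + ‖z‖^2/8)) := by
    simp only [U2]
  rw [this, key, integral_radial]
  ring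
end

section
/- The one-dimensional integral ∫₀^∞ 16 t (t² - 1)/(t² + 1)³ · (log(1 + t²))² dt equals 12. -/
open MeasureTheory Real Filter Set

noncomputable def Fanti (t : ℝ) : ℝ :=
  8 * ((Real.log (1 + t^2))^2 / (1 + t^2)^2 - (Real.log (1 + t^2))^2 / (1 + t^2)
    + Real.log (1 + t^2) / (1 + t^2)^2 - 2 * Real.log (1 + t^2) / (1 + t^2)
    + 1 / (2 * (1 + t^2)^2) - 2 / (1 + t^2))

lemma Fanti_deriv (x : ℝ) :
    HasDerivAt Fanti (16 * x * (x^2 - 1) / (x^2 + 1)^3 * (Real.log (1 + x^2))^2) x := by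
  have hu0 : (0:ℝ) < 1 + x^2 := by positivity
  have hu20 : (0:ℝ) < (1 + x^2)^2 := by positivity
  have hu : HasDerivAt (fun t : ℝ => 1 + t^2) (2*x) x := by
    simpa using (hasDerivAt_pow 2 x).const_add 1
  have hL : HasDerivAt (fun t : ℝ => Real.log (1 + t^2)) (2*x/(1+x^2)) x := hu.log hu0.ne'
  have hu2 : HasDerivAt (fun t : ℝ => (1 + t^2)^2) (2*(1+x^2)*(2*x)) x := by
    have := hu.fun_pow 2
    norm_num at this
    convert this using 1
    try ring
  have hL2 : HasDerivAt (fun t : ℝ => (Real.log (1 + t^2))^2)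
      (2 * Real.log (1+x^2) * (2*x/(1+x^2))) x := by
    have := hL.fun_pow 2
    norm_num at this
    convert this using 1
    try ring
  have h1 := hL2.fun_div hu2 hu20.ne'
  have h2 := hL2.fun_div hu hu0.ne'
  have h3 := hL.fun_div hu2 hu20.ne'
  have h4 := (hL.const_mul 2).fun_div hu hu0.ne'
  have h5 := (hasDerivAt_const x (1:ℝ)).fun_div (hu2.const_mul 2) (by positivity)
  have h6 := (hasDerivAt_const x (2:ℝ)).fun_div hu hu0.ne'
  have hF := (((((h1.sub h2).add h3).sub h4).add h5).sub h6).const_mul 8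
  refine hF.congr_deriv ?_
  have h1 : (1 + x^2) ≠ 0 := hu0.ne'
  field_simp
  ring

lemma Fanti_tendsto : Tendsto Fanti atTop (nhds 0) := by
  have hv : Tendsto (fun t : ℝ => 1 + t^2) atTop atTop := by
    apply tendsto_atTop_add_const_left
    exact tendsto_pow_atTop two_ne_zero
  have hL2v : Tendsto (fun v : ℝ => (Real.log v)^2 / v) atTop (nhds 0) := by
    simpa using tendsto_pow_log_div_mul_add_atTop 1 0 2 one_ne_zero
  have hLv : Tendsto (fun v : ℝ => Real.log v / v) atTop (nhds 0) := by
    simpa using tendsto_pow_log_div_mul_add_atTop 1 0 1 one_ne_zero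
  have hinv : Tendsto (fun v : ℝ => 1 / v) atTop (nhds 0) := by
    simpa using tendsto_inv_atTop_zero
  have key : Tendsto (fun v : ℝ =>
      8 * ((Real.log v)^2 / v^2 - (Real.log v)^2 / v + Real.log v / v^2
        - 2 * (Real.log v / v) + 1 / (2 * v^2) - 2 * (1 / v))) atTop (nhds 0) := by
    have hL2v2 : Tendsto (fun v : ℝ => (Real.log v)^2 / v^2) atTop (nhds 0) := by
      have := hL2v.mul hinv
      simp only [mul_zero] at this
      exact this.congr (fun v => by ring)
    have hLv2 : Tendsto (fun v : ℝ => Real.log v / v^2) atTop (nhds 0) := by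
      have := hLv.mul hinv
      simp only [mul_zero] at this
      exact this.congr (fun v => by ring)
    have hinv2 : Tendsto (fun v : ℝ => 1 / (2 * v^2)) atTop (nhds 0) := by
      have := (hinv.mul hinv).const_mul (1/2 : ℝ)
      simp only [mul_zero, zero_mul] at this
      exact this.congr (fun v => by ring)
    have := (((((hL2v2.sub hL2v).add hLv2).sub (hLv.const_mul 2)).add hinv2).sub
      (hinv.const_mul 2)).const_mul 8
    simpa using this
  have := key.comp hv
  refine this.congr (fun t => ?_)
  simp only [Function.comp, Fanti]
  ring

lemma Fanti_cont : Continuous Fanti := by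
  have h : ∀ x : ℝ, (1 + x^2) ≠ 0 := fun x => by positivity
  have h2 : ∀ x : ℝ, ((1:ℝ) + x^2)^2 ≠ 0 := fun x => by positivity
  have hL : Continuous (fun t : ℝ => Real.log (1 + t^2)) :=
    Continuous.log (by continuity) h
  unfold Fanti
  fun_prop (disch := intros; positivity)

theorem integral_one_dim :
    ∫ t in Set.Ioi (0:ℝ), 16 * t * (t^2 - 1) / (t^2 + 1)^3 * (Real.log (1 + t^2))^2 = 12 := by
  set g : ℝ → ℝ := fun t => 16 * t * (t^2 - 1) / (t^2 + 1)^3 * (Real.log (1 + t^2))^2 with hg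
  have hcont : Continuous g := by
    apply Continuous.mul
    · apply Continuous.div (by continuity) (by continuity)
      intro x; positivity
    · exact (Continuous.log (by continuity) (fun x => by positivity)).pow 2
  have hderiv : ∀ x ∈ Ioi (0:ℝ), HasDerivAt Fanti (g x) x := fun x _ => Fanti_deriv x
  have hint : IntegrableOn g (Ioi (0:ℝ)) := by
    have h1 : IntegrableOn g (Ioc (0:ℝ) 1) := hcont.integrableOn_Ioc
    have h2 : IntegrableOn g (Ioi (1:ℝ)) := by
      apply integrableOn_Ioi_deriv_of_nonneg Fanti_cont.continuousWithinAt
        (fun x _ => Fanti_deriv x) _ Fanti_tendsto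
      intro x hx
      simp only [mem_Ioi] at hx
      have h1 : (0:ℝ) ≤ 16 * x * (x^2 - 1) := by nlinarith
      have h2 : (0:ℝ) < (x^2 + 1)^3 := by positivity
      have := mul_nonneg (div_nonneg h1 h2.le) (sq_nonneg (Real.log (1 + x^2)))
      simpa [hg] using this
    have := h1.union h2
    rwa [Ioc_union_Ioi_eq_Ioi (by norm_num : (0:ℝ) ≤ 1)] at this
  have := integral_Ioi_of_hasDerivAt_of_tendsto
    Fanti_cont.continuousWithinAt hderiv hint Fanti_tendsto
  rw [this]
  simp [Fanti]
  norm_num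
end

section
/- For r > 0, the function u₁(r) = ((8 - r²) log r + 16)/(r² + 8) satisfies the ODE -u₁'' - (1/r) u₁' = e^{U(r)} u₁, where e^{U(r)} = 1/(1 + r²/8)². -/
open Real

private lemma hu_deriv (s : ℝ) (hs : 0 < s) :
    HasDerivAt (fun s : ℝ => ((8 - s^2) * Real.log s + 16) / (s^2 + 8))
      ((-32*s^2*Real.log s + 64 - 32*s^2 - s^4)/(s*(s^2+8)^2)) s := by
  have hDne : (s^2 + 8 : ℝ) ≠ 0 := by positivity
  have hN : HasDerivAt (fun s : ℝ => (8 - s^2) * Real.log s + 16)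
      ((-(2*s)) * Real.log s + (8 - s^2) * s⁻¹) s := by
    have h := (((hasDerivAt_const s (8:ℝ)).sub (hasDerivAt_pow 2 s)).mul
      (Real.hasDerivAt_log hs.ne')).add_const 16
    refine h.congr_deriv ?_
    simp only [Pi.sub_apply]
    norm_num
  have hD : HasDerivAt (fun s : ℝ => s^2 + 8) (2*s) s := by
    simpa using (hasDerivAt_pow 2 s).add_const 8
  have h := hN.div hD hDne
  refine h.congr_deriv ?_
  field_simp
  ring

private lemma hf1_deriv (s : ℝ) (hs : 0 < s) :
    HasDerivAt (fun s : ℝ => (-32*s^2*Real.log s + 64 - 32*s^2 - s^4)/(s*(s^2+8)^2))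
      (((-64*s*Real.log s - 32*s - 64*s - 4*s^3) * (s*(s^2+8)^2)
        - (-32*s^2*Real.log s + 64 - 32*s^2 - s^4) * ((s^2+8)^2 + s*(2*(s^2+8)*(2*s))))
        / (s*(s^2+8)^2)^2) s := by
  have hBne : (s*(s^2+8)^2 : ℝ) ≠ 0 := by positivity
  have hA : HasDerivAt (fun s : ℝ => -32*s^2*Real.log s + 64 - 32*s^2 - s^4)
      (-64*s*Real.log s - 32*s - 64*s - 4*s^3) s := by
    have h := (((((hasDerivAt_pow 2 s).const_mul (-32:ℝ)).mul
      (Real.hasDerivAt_log hs.ne')).add_const 64).sub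
      ((hasDerivAt_pow 2 s).const_mul (32:ℝ))).sub (hasDerivAt_pow 4 s)
    refine h.congr_deriv ?_
    field_simp
    norm_num
    ring
  have hD : HasDerivAt (fun s : ℝ => s^2 + 8) (2*s) s := by
    simpa using (hasDerivAt_pow 2 s).add_const 8
  have hB : HasDerivAt (fun s : ℝ => s*(s^2+8)^2)
      ((s^2+8)^2 + s*(2*(s^2+8)*(2*s))) s := by
    have h := (hasDerivAt_id s).mul (hD.pow 2)
    refine h.congr_deriv ?_
    simp only [id_eq, Pi.pow_apply]
    norm_num
  exact hA.div hB hBne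

theorem u1_solves_radial_linearized_liouville :
    ∀ r : ℝ, 0 < r →
      -(deriv (deriv (fun s : ℝ => ((8 - s^2) * Real.log s + 16) / (s^2 + 8))) r)
        - (1 / r) * deriv (fun s : ℝ => ((8 - s^2) * Real.log s + 16) / (s^2 + 8)) r
      = (1 / (1 + r^2 / 8)^2) * (((8 - r^2) * Real.log r + 16) / (r^2 + 8)) := by
  intro r hr
  have heq : deriv (fun s : ℝ => ((8 - s^2) * Real.log s + 16) / (s^2 + 8))
      =ᶠ[nhds r] (fun s : ℝ => (-32*s^2*Real.log s + 64 - 32*s^2 - s^4)/(s*(s^2+8)^2)) := by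
    filter_upwards [isOpen_Ioi.mem_nhds (Set.mem_Ioi.mpr hr)] with s hs
    exact (hu_deriv s hs).deriv
  have h1 : deriv (fun s : ℝ => ((8 - s^2) * Real.log s + 16) / (s^2 + 8)) r
      = (-32*r^2*Real.log r + 64 - 32*r^2 - r^4)/(r*(r^2+8)^2) := (hu_deriv r hr).deriv
  have h2 : deriv (deriv (fun s : ℝ => ((8 - s^2) * Real.log s + 16) / (s^2 + 8))) r
      = ((-64*r*Real.log r - 32*r - 64*r - 4*r^3) * (r*(r^2+8)^2)
        - (-32*r^2*Real.log r + 64 - 32*r^2 - r^4) * ((r^2+8)^2 + r*(2*(r^2+8)*(2*r))))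
        / (r*(r^2+8)^2)^2 := by
    rw [heq.deriv_eq]
    exact (hf1_deriv r hr).deriv
  rw [h1, h2]
  have hDne : (r^2 + 8 : ℝ) ≠ 0 := by positivity
  have h8 : (1 + r^2/8 : ℝ) ≠ 0 := by positivity
  field_simp
  ring
end

section
/- Let v ∈ C²(ℝ²) be a radial solution of −Δv = e^U v on ℝ² with ∫_{ℝ²} |∇v|² < ∞, where U(x) = −2 log(1 + |x|²/8). Then v is a constant multiple of (8 − |x|²)/(8 + |x|²). -/
open MeasureTheory Real

open Real Filter Set Topology


lemma h8ne (t : ℝ) : (8:ℝ) + t^2 ≠ 0 := by positivity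

noncomputable def phi (t : ℝ) : ℝ := (8 - t^2)/(8 + t^2)
noncomputable def phid (t : ℝ) : ℝ := -32*t/(8+t^2)^2
noncomputable def phidd (t : ℝ) : ℝ := -32*(8-3*t^2)/(8+t^2)^3

lemma hasDerivAt_phi (t : ℝ) : HasDerivAt phi (phid t) t := by
  have h1 : HasDerivAt (fun t : ℝ => 8 - t^2) (-(2*t)) t := by
    simpa using (hasDerivAt_pow 2 t).const_sub 8
  have h2 : HasDerivAt (fun t : ℝ => 8 + t^2) (2*t) t := by
    simpa using (hasDerivAt_pow 2 t).const_add 8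
  have := h1.div h2 (h8ne t)
  refine this.congr_deriv ?_
  unfold phid
  field_simp
  ring

lemma hasDerivAt_phid (t : ℝ) : HasDerivAt phid (phidd t) t := by
  have h1 : HasDerivAt (fun t : ℝ => -32*t) (-32) t := by
    simpa using (hasDerivAt_id t).const_mul (-32 : ℝ)
  have h2 : HasDerivAt (fun t : ℝ => (8 + t^2)^2) (2*(8+t^2)*(2*t)) t := by
    have h0 : HasDerivAt (fun t : ℝ => 8 + t^2) (2*t) t := by
      simpa using (hasDerivAt_pow 2 t).const_add 8
    have := h0.pow 2
    refine this.congr_deriv ?_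
    push_cast
    ring
  have := h1.div h2 (pow_ne_zero 2 (h8ne t))
  refine this.congr_deriv ?_
  unfold phidd
  field_simp
  ring

lemma phi_ode (t : ℝ) (ht : t ≠ 0) : phidd t + phid t / t + (64/(8+t^2)^2) * phi t = 0 := by
  unfold phi phid phidd
  field_simp
  ring

lemma phi_zero : phi 0 = 1 := by norm_num [phi]
lemma phid_zero : phid 0 = 0 := by norm_num [phid]

lemma ode_unique (f f1 f2 : ℝ → ℝ)
    (hf : ∀ t, HasDerivAt f (f1 t) t)
    (hf1 : ∀ t, HasDerivAt f1 (f2 t) t)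
    (hzero : f1 0 = 0)
    (hode : ∀ t, 0 < t → f2 t + f1 t / t + (64/(8+t^2)^2) * f t = 0) :
    ∀ t, 0 ≤ t → f t = f 0 * phi t := by
  set W : ℝ → ℝ := fun t => f1 t * phi t - f t * phid t with hWdef
  set M : ℝ → ℝ := fun t => t * W t with hMdef
  have hWd : ∀ t, HasDerivAt W (f2 t * phi t - f t * phidd t) t := by
    intro t
    have := ((hf1 t).mul (hasDerivAt_phi t)).sub ((hf t).mul (hasDerivAt_phid t))
    refine this.congr_deriv ?_
    ring
  have hMd : ∀ t, HasDerivAt M (W t + t * (f2 t * phi t - f t * phidd t)) t := by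
    intro t
    have := (hasDerivAt_id t).mul (hWd t)
    refine this.congr_deriv ?_
    simp only [id_eq]
    ring
  have hW0 : W 0 = 0 := by
    simp [hWdef, hzero, phi_zero, phid_zero]
  have hMd0 : ∀ t, 0 ≤ t → HasDerivAt M 0 t := by
    intro t ht
    rcases eq_or_lt_of_le ht with h | h
    · subst h
      have := hMd 0
      simpa [hW0] using this
    · have hode' := hode t h
      have hphiode := phi_ode t (ne_of_gt h)
      have hf2 : f2 t = -(f1 t / t) - (64/(8+t^2)^2) * f t := by linarith
      have hpdd : phidd t = -(phid t / t) - (64/(8+t^2)^2) * phi t := by linarith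
      have hval : W t + t * (f2 t * phi t - f t * phidd t) = 0 := by
        rw [hf2, hpdd, hWdef]
        field_simp
        ring
      have := hMd t
      rwa [hval] at this
  have hM0 : ∀ t, 0 ≤ t → M t = M 0 := by
    intro b hb
    have := constant_of_has_deriv_right_zero (f := M) (a := 0) (b := b)
      (fun x _ => ((hMd x).continuousAt).continuousWithinAt)
      (fun x hx => ((hMd0 x hx.1).hasDerivWithinAt))
    exact this b (right_mem_Icc.mpr hb)
  have hWeq : ∀ t, 0 ≤ t → W t = 0 := by
    intro t ht
    rcases eq_or_lt_of_le ht with h | h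
    · rw [← h]; exact hW0
    · have h0 : t * W t = 0 := by simpa [hMdef] using hM0 t ht
      exact (mul_eq_zero.mp h0).resolve_left (ne_of_gt h)
  set D : ℝ → ℝ := fun t => f t - f 0 * phi t with hDdef
  set D1 : ℝ → ℝ := fun t => f1 t - f 0 * phid t with hD1def
  have hD : ∀ t, HasDerivAt D (D1 t) t := fun t =>
    (hf t).sub ((hasDerivAt_phi t).const_mul (f 0))
  have hWD : ∀ t, 0 ≤ t → D1 t * phi t - D t * phid t = 0 := by
    intro t ht
    have h1 : D1 t * phi t - D t * phid t = W t := by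
      simp only [hDdef, hD1def, hWdef]; ring
    rw [h1]; exact hWeq t ht
  have hR : ∀ t, 0 ≤ t → phi t ≠ 0 → HasDerivAt (fun s => D s / phi s) 0 t := by
    intro t ht hne
    have := (hD t).div (hasDerivAt_phi t) hne
    have hz : (D1 t * phi t - D t * phid t) / phi t ^ 2 = 0 := by
      rw [hWD t ht]; simp
    rwa [hz] at this
  set r8 : ℝ := Real.sqrt 8 with hr8def
  have hr8pos : 0 < r8 := Real.sqrt_pos.mpr (by norm_num)
  have hr8sq : r8 ^ 2 = 8 := Real.sq_sqrt (by norm_num)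
  have hphir8 : phi r8 = 0 := by unfold phi; rw [hr8sq]; simp
  have hphidr8 : phid r8 ≠ 0 := by
    unfold phid
    rw [hr8sq]
    apply div_ne_zero
    · exact mul_ne_zero (by norm_num) (ne_of_gt hr8pos)
    · norm_num
  have hphi_pos : ∀ t, 0 ≤ t → t < r8 → 0 < phi t := by
    intro t ht htl
    have : t^2 < 8 := by nlinarith
    unfold phi
    apply div_pos <;> nlinarith
  have hphi_neg : ∀ t, r8 < t → phi t < 0 := by
    intro t htl
    have : 8 < t^2 := by nlinarith
    unfold phi
    apply div_neg_of_neg_of_pos <;> nlinarith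
  have hD0 : D 0 = 0 := by simp [hDdef, phi_zero]
  have hDlt : ∀ t, 0 ≤ t → t < r8 → D t = 0 := by
    intro b hb hbl
    have hRconst := constant_of_has_deriv_right_zero (f := fun s => D s / phi s) (a := 0) (b := b)
      (fun x hx => ((hR x hx.1 (ne_of_gt (hphi_pos x hx.1 (lt_of_le_of_lt hx.2 hbl)))).continuousAt).continuousWithinAt)
      (fun x hx => (hR x hx.1 (ne_of_gt (hphi_pos x hx.1 (lt_trans hx.2 hbl)))).hasDerivWithinAt)
    have h1 : D b / phi b = D 0 / phi 0 := hRconst b (right_mem_Icc.mpr hb)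
    rw [hD0, phi_zero] at h1
    norm_num at h1
    exact h1.resolve_right (ne_of_gt (hphi_pos b hb hbl))
  have hDr8 : D r8 = 0 := by
    have hc : Tendsto D (𝓝[<] r8) (𝓝 (D r8)) :=
      ((hD r8).continuousAt).continuousWithinAt.tendsto
    have hev : D =ᶠ[𝓝[<] r8] fun _ => (0:ℝ) := by
      filter_upwards [Ioo_mem_nhdsLT_of_mem (⟨hr8pos, le_refl r8⟩ : r8 ∈ Ioc 0 r8)] with t ht
      exact hDlt t (le_of_lt ht.1) ht.2
    exact tendsto_nhds_unique hc (Tendsto.congr' hev.symm tendsto_const_nhds)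
  have hD1r8 : D1 r8 = 0 := by
    have hs := (hasDerivAt_iff_tendsto_slope).mp (hD r8)
    have hs' : Tendsto (slope D r8) (𝓝[<] r8) (𝓝 (D1 r8)) :=
      hs.mono_left (nhdsWithin_mono r8 (fun x hx => ne_of_lt hx))
    have hev : slope D r8 =ᶠ[𝓝[<] r8] fun _ => (0:ℝ) := by
      filter_upwards [Ioo_mem_nhdsLT_of_mem (⟨hr8pos, le_refl r8⟩ : r8 ∈ Ioc 0 r8)] with t ht
      rw [slope_def_field, hDr8, hDlt t (le_of_lt ht.1) ht.2]
      simp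
    exact tendsto_nhds_unique hs' (Tendsto.congr' hev.symm tendsto_const_nhds)
  have hDgt : ∀ T, r8 < T → D T = 0 := by
    intro T hT
    have hconst : ∀ a, r8 < a → a ≤ T → D a / phi a = D T / phi T := by
      intro a ha haT
      have hRconst := constant_of_has_deriv_right_zero (f := fun s => D s / phi s) (a := a) (b := T)
        (fun x hx => ((hR x (le_trans (le_of_lt hr8pos) (le_trans (le_of_lt ha) hx.1))
          (ne_of_lt (hphi_neg x (lt_of_lt_of_le ha hx.1)))).continuousAt).continuousWithinAt)
        (fun x hx => (hR x (le_trans (le_of_lt hr8pos) (le_trans (le_of_lt ha) hx.1))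
          (ne_of_lt (hphi_neg x (lt_of_lt_of_le ha hx.1)))).hasDerivWithinAt)
      exact (hRconst T (right_mem_Icc.mpr haT)).symm
    have hev : (fun t => D t / phi t) =ᶠ[𝓝[>] r8] fun _ => D T / phi T := by
      filter_upwards [Ioo_mem_nhdsGT_of_mem (⟨le_refl r8, hT⟩ : r8 ∈ Ico r8 T)] with t ht
      exact hconst t ht.1 (le_of_lt ht.2)
    have h1 : Tendsto (fun t => D t / phi t) (𝓝[>] r8) (𝓝 (D T / phi T)) :=
      Tendsto.congr' hev.symm tendsto_const_nhds
    have hsD : Tendsto (slope D r8) (𝓝[>] r8) (𝓝 (D1 r8)) :=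
      ((hasDerivAt_iff_tendsto_slope).mp (hD r8)).mono_left
        (nhdsWithin_mono r8 (fun x hx => ne_of_gt hx))
    have hsphi : Tendsto (slope phi r8) (𝓝[>] r8) (𝓝 (phid r8)) :=
      ((hasDerivAt_iff_tendsto_slope).mp (hasDerivAt_phi r8)).mono_left
        (nhdsWithin_mono r8 (fun x hx => ne_of_gt hx))
    have hdiv : Tendsto (fun t => slope D r8 t / slope phi r8 t) (𝓝[>] r8) (𝓝 0) := by
      have := hsD.div hsphi hphidr8
      rwa [hD1r8, zero_div] at this
    have hev2 : (fun t => slope D r8 t / slope phi r8 t) =ᶠ[𝓝[>] r8] fun t => D t / phi t := by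
      filter_upwards [self_mem_nhdsWithin] with t ht
      have htne : t - r8 ≠ 0 := sub_ne_zero.mpr (ne_of_gt ht)
      rw [slope_def_field, slope_def_field, hDr8, hphir8, sub_zero, sub_zero]
      rw [div_div_div_cancel_right₀]
      exact htne
    have h2 : Tendsto (fun t => D t / phi t) (𝓝[>] r8) (𝓝 0) :=
      Tendsto.congr' hev2 hdiv
    have hk : D T / phi T = 0 := tendsto_nhds_unique h1 h2
    exact (div_eq_zero_iff.mp hk).resolve_right (ne_of_lt (hphi_neg T hT))
  intro t ht
  have hDt : D t = 0 := by
    rcases lt_trichotomy t r8 with h | h | h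
    · exact hDlt t ht h
    · rw [h]; exact hDr8
    · exact hDgt t h
  simp only [hDdef] at hDt
  linarith


open MeasureTheory

lemma lineDeriv' {F : EuclideanSpace ℝ (Fin 2) → ℝ} (hF : Differentiable ℝ F)
    (x d : EuclideanSpace ℝ (Fin 2)) (t : ℝ) :
    HasDerivAt (fun s : ℝ => F (x + s • d)) (fderiv ℝ F (x + t • d) d) t := by
  have hγ : HasDerivAt (fun s : ℝ => x + s • d) d t := by
    simpa using ((hasDerivAt_id t).smul_const d).const_add x
  exact (hF (x + t • d)).hasFDerivAt.comp_hasDerivAt t hγ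

theorem radial_kernel_linearized_liouville (v : EuclideanSpace ℝ (Fin 2) → ℝ)
    (hv : ContDiff ℝ 2 v) (hrad : ∃ g : ℝ → ℝ, ∀ x, v x = g ‖x‖)
    (heq : ∀ x, -lap2 v x = Real.exp (U2 x) * v x)
    (hint : Integrable (fun x : EuclideanSpace ℝ (Fin 2) => ‖gradient v x‖^2)) :
    ∃ c : ℝ, ∀ x : EuclideanSpace ℝ (Fin 2), v x = c * ((8 - ‖x‖^2) / (8 + ‖x‖^2)) := by
  obtain ⟨g, hg⟩ := hrad
  set e0 : EuclideanSpace ℝ (Fin 2) := EuclideanSpace.single 0 1 with he0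
  set e1 : EuclideanSpace ℝ (Fin 2) := EuclideanSpace.single 1 1 with he1
  have hvdiff : Differentiable ℝ v := hv.differentiable (by norm_num)
  have hDv : ContDiff ℝ 1 (fderiv ℝ v) := hv.fderiv_right (by norm_num)
  have hDi : ∀ d : EuclideanSpace ℝ (Fin 2),
      Differentiable ℝ (fun y => fderiv ℝ v y d) := fun d =>
    (ContinuousLinearMap.apply ℝ ℝ d).differentiable.comp (hDv.differentiable (by norm_num))
  set f : ℝ → ℝ := fun r => v (r • e0) with hfdef
  set f1 : ℝ → ℝ := fun r => fderiv ℝ v (r • e0) e0 with hf1def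
  set f2 : ℝ → ℝ := fun r => fderiv ℝ (fun y => fderiv ℝ v y e0) (r • e0) e0 with hf2def
  have hne0 : ‖e0‖ = 1 := by
    rw [he0, EuclideanSpace.norm_single]; norm_num
  have hne1 : ‖e1‖ = 1 := by
    rw [he1, EuclideanSpace.norm_single]; norm_num
  have hnsmul : ∀ r : ℝ, ‖r • e0‖ = |r| := by
    intro r; rw [norm_smul, hne0, Real.norm_eq_abs, mul_one]
  have hf : ∀ r, HasDerivAt f (f1 r) r := by
    intro r
    have := lineDeriv' hvdiff 0 e0 r
    simpa using this
  have hf1 : ∀ r, HasDerivAt f1 (f2 r) r := by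
    intro r
    have := lineDeriv' (hDi e0) 0 e0 r
    simpa using this
  have hfg : ∀ r, f r = g |r| := by
    intro r; rw [hfdef]; simp only; rw [hg, hnsmul]
  have hfrad : ∀ x, v x = f ‖x‖ := by
    intro x; rw [hg, hfg, abs_of_nonneg (norm_nonneg x)]
  have hzero : f1 0 = 0 := by
    have hneg : (fun r => f (-r)) = f := by
      funext r; rw [hfg, hfg, abs_neg]
    have h2 : HasDerivAt (fun r => f (-r)) (f1 (-0) * (-1)) 0 := by
      exact (hf (-0)).comp 0 (hasDerivAt_neg 0)
    rw [hneg] at h2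
    have := (hf 0).unique h2
    simp at this
    linarith
  -- norm of combinations
  have hnorm2 : ∀ a s : ℝ, ‖(a • e0 + s • e1 : EuclideanSpace ℝ (Fin 2))‖
      = Real.sqrt (a^2 + s^2) := by
    intro a s
    rw [EuclideanSpace.norm_eq]
    congr 1
    rw [Fin.sum_univ_two]
    simp [he0, he1, EuclideanSpace.single_apply, sq_abs]
  have hode : ∀ t, 0 < t → f2 t + f1 t / t + (64/(8+t^2)^2) * f t = 0 := by
    intro t ht
    set x : EuclideanSpace ℝ (Fin 2) := t • e0 with hx
    have hxnorm : ‖x‖ = t := by rw [hx, hnsmul, abs_of_pos ht]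
    have htpos : ∀ s : ℝ, (0:ℝ) < t^2 + s^2 := fun s => by positivity
    have hsq : ∀ s : ℝ, Real.sqrt (t^2 + s^2) ≠ 0 := fun s =>
      ne_of_gt (Real.sqrt_pos.mpr (htpos s))
    have hρ : ∀ s : ℝ, HasDerivAt (fun s => Real.sqrt (t^2 + s^2))
        (s / Real.sqrt (t^2 + s^2)) s := by
      intro s
      have h1 : HasDerivAt (fun s : ℝ => t^2 + s^2) (2*s) s := by
        simpa using (hasDerivAt_pow 2 s).const_add (t^2)
      have := (Real.hasDerivAt_sqrt (ne_of_gt (htpos s))).comp s h1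
      refine this.congr_deriv ?_
      field_simp
    have hρ0 : Real.sqrt (t^2 + 0^2) = t := by
      rw [show t^2 + 0^2 = t^2 by ring, Real.sqrt_sq ht.le]
    -- F1 equality
    have hFeq : (fun s : ℝ => v (x + s • e1)) = fun s => f (Real.sqrt (t^2 + s^2)) := by
      funext s
      rw [hg, hfg, hx, hnorm2, abs_of_nonneg (Real.sqrt_nonneg _)]
    have hGeq : (fun s : ℝ => fderiv ℝ v (x + s • e1) e1)
        = fun s => f1 (Real.sqrt (t^2 + s^2)) * (s / Real.sqrt (t^2 + s^2)) := by
      funext s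
      have h1 := lineDeriv' hvdiff x e1 s
      rw [hFeq] at h1
      have h2 : HasDerivAt (fun s => f (Real.sqrt (t^2 + s^2)))
          (f1 (Real.sqrt (t^2 + s^2)) * (s / Real.sqrt (t^2 + s^2))) s := by
        have := (hf (Real.sqrt (t^2 + s^2))).comp s (hρ s)
        simpa [Function.comp_def] using this
      exact h1.unique h2
    -- derivative of G at 0, two ways
    have hG1 : HasDerivAt (fun s : ℝ => fderiv ℝ v (x + s • e1) e1)
        (fderiv ℝ (fun y => fderiv ℝ v y e1) x e1) 0 := by
      have := lineDeriv' (hDi e1) x e1 0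
      simpa using this
    have hG2 : HasDerivAt (fun s : ℝ => fderiv ℝ v (x + s • e1) e1) (f1 t / t) 0 := by
      rw [hGeq]
      have hA : HasDerivAt (fun s : ℝ => f1 (Real.sqrt (t^2 + s^2)))
          (f2 t * (0 / Real.sqrt (t^2 + 0^2))) 0 := by
        have := (hf1 (Real.sqrt (t^2 + 0^2))).comp 0 (hρ 0)
        rw [hρ0] at this ⊢
        simpa [Function.comp_def] using this
      have hB : HasDerivAt (fun s : ℝ => s / Real.sqrt (t^2 + s^2))
          ((1 * Real.sqrt (t^2 + 0^2) - 0 * (0 / Real.sqrt (t^2 + 0^2)))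
            / (Real.sqrt (t^2 + 0^2))^2) 0 := by
        exact (hasDerivAt_id 0).div (hρ 0) (hsq 0)
      have hprod := hA.mul hB
      refine hprod.congr_deriv ?_
      rw [hρ0]
      field_simp
      ring
    have hT1 : fderiv ℝ (fun y => fderiv ℝ v y e1) x e1 = f1 t / t := hG1.unique hG2
    -- laplacian
    have hlap : lap2 v x = f2 t + f1 t / t := by
      rw [lap2, Fin.sum_univ_two, ← he0, ← he1, hT1]
    -- exponent
    have hexp : Real.exp (U2 x) = 64/(8+t^2)^2 := by
      rw [U2, hxnorm]
      have hb : (0:ℝ) < 1 + t^2/8 := by positivity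
      rw [show (-2 : ℝ) * Real.log (1+t^2/8) = -(Real.log (1+t^2/8) + Real.log (1+t^2/8)) by ring,
        Real.exp_neg, Real.exp_add, Real.exp_log hb]
      rw [eq_div_iff (by positivity)]
      field_simp
      ring
    have hvx : v x = f t := by rw [hfrad, hxnorm]
    have := heq x
    rw [hlap, hexp, hvx] at this
    linarith
  have hmain := ode_unique f f1 f2 hf hf1 hzero hode
  refine ⟨f 0, fun x => ?_⟩
  rw [hfrad x, hmain ‖x‖ (norm_nonneg x)]
  rfl
end

section
/- With U(x) = −2 log(1 + |x|²/8) and w₀ any C² solution on ℝ² of −Δw₀ − e^U w₀ = −(U²/2) e^U satisfying |w₀(x)| ≤ C(1 + |x|)^τ for some τ ∈ (0,1), one has lim_{R→∞} ∫_{∂B_R(0)} ∂w₀/∂ν dσ = 24π; equivalently ∫_{ℝ²} Δw₀ dx = 24π. -/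
open MeasureTheory Real

namespace W0Aux

open Set Filter Metric Topology

open Set Filter Metric

noncomputable def d1 (u : ℝ × ℝ → ℝ) (p : ℝ × ℝ) : ℝ := fderiv ℝ u p (1, 0)
noncomputable def d2 (u : ℝ × ℝ → ℝ) (p : ℝ × ℝ) : ℝ := fderiv ℝ u p (0, 1)
noncomputable def lapP (u : ℝ × ℝ → ℝ) (p : ℝ × ℝ) : ℝ := d1 (d1 u) p + d2 (d2 u) p

noncomputable def qq (p : ℝ × ℝ) : ℝ := 8 + p.1 ^ 2 + p.2 ^ 2
noncomputable def phi (p : ℝ × ℝ) : ℝ := 16 / qq p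
noncomputable def phi1 (p : ℝ × ℝ) : ℝ := -32 * p.1 / qq p ^ 2
noncomputable def phi2 (p : ℝ × ℝ) : ℝ := -32 * p.2 / qq p ^ 2

lemma qq_pos (p : ℝ × ℝ) : 0 < qq p := by
  have := sq_nonneg p.1; have := sq_nonneg p.2; simp only [qq]; nlinarith

lemma contDiff_qq : ContDiff ℝ ⊤ qq :=
  (contDiff_const.add ((contDiff_fst).pow 2)).add ((contDiff_snd).pow 2)

lemma contDiff_phi : ContDiff ℝ ⊤ phi :=
  contDiff_const.div contDiff_qq fun p => (qq_pos p).ne'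

lemma contDiff_phi1 : ContDiff ℝ ⊤ phi1 :=
  (contDiff_const.mul contDiff_fst).div (contDiff_qq.pow 2)
    fun p => pow_ne_zero 2 (qq_pos p).ne'

lemma contDiff_phi2 : ContDiff ℝ ⊤ phi2 :=
  (contDiff_const.mul contDiff_snd).div (contDiff_qq.pow 2)
    fun p => pow_ne_zero 2 (qq_pos p).ne'

lemma d1_eq (u : ℝ × ℝ → ℝ) (p : ℝ × ℝ) (hu : DifferentiableAt ℝ u p) :
    d1 u p = deriv (fun t => u (t, p.2)) p.1 := by
  have h : HasDerivAt (fun t : ℝ => ((t, p.2) : ℝ × ℝ)) (1, 0) p.1 :=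
    (hasDerivAt_id p.1).prodMk (hasDerivAt_const p.1 p.2)
  exact ((hu.hasFDerivAt.comp_hasDerivAt p.1 (by simpa using h)).deriv).symm

lemma d2_eq (u : ℝ × ℝ → ℝ) (p : ℝ × ℝ) (hu : DifferentiableAt ℝ u p) :
    d2 u p = deriv (fun t => u (p.1, t)) p.2 := by
  have h : HasDerivAt (fun t : ℝ => ((p.1, t) : ℝ × ℝ)) (0, 1) p.2 :=
    (hasDerivAt_const p.2 p.1).prodMk (hasDerivAt_id p.2)
  exact ((hu.hasFDerivAt.comp_hasDerivAt p.2 (by simpa using h)).deriv).symm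

lemma hq1 (p : ℝ × ℝ) : HasDerivAt (fun t : ℝ => 8 + t ^ 2 + p.2 ^ 2) (2 * p.1) p.1 := by
  simpa using (((hasDerivAt_pow 2 p.1).const_add 8).add_const (p.2 ^ 2))

lemma hq2 (p : ℝ × ℝ) : HasDerivAt (fun t : ℝ => 8 + p.1 ^ 2 + t ^ 2) (2 * p.2) p.2 := by
  simpa using ((hasDerivAt_pow 2 p.2).const_add (8 + p.1 ^ 2))

lemma d1_phi : d1 phi = phi1 := by
  funext p
  rw [d1_eq phi p ((contDiff_phi.differentiable (by simp)) p)]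
  have hd : HasDerivAt (fun t : ℝ => 16 / (8 + t ^ 2 + p.2 ^ 2))
      ((0 * (8 + p.1 ^ 2 + p.2 ^ 2) - 16 * (2 * p.1)) / (8 + p.1 ^ 2 + p.2 ^ 2) ^ 2) p.1 :=
    (hasDerivAt_const p.1 16).div (hq1 p) (qq_pos p).ne'
  have h2 : (fun t : ℝ => phi (t, p.2)) = fun t : ℝ => 16 / (8 + t ^ 2 + p.2 ^ 2) := rfl
  rw [h2, hd.deriv]
  show _ = -32 * p.1 / qq p ^ 2
  have h3 : qq p = 8 + p.1 ^ 2 + p.2 ^ 2 := rfl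
  rw [h3]; ring

lemma d2_phi : d2 phi = phi2 := by
  funext p
  rw [d2_eq phi p ((contDiff_phi.differentiable (by simp)) p)]
  have hd : HasDerivAt (fun t : ℝ => 16 / (8 + p.1 ^ 2 + t ^ 2))
      ((0 * (8 + p.1 ^ 2 + p.2 ^ 2) - 16 * (2 * p.2)) / (8 + p.1 ^ 2 + p.2 ^ 2) ^ 2) p.2 :=
    (hasDerivAt_const p.2 16).div (hq2 p) (qq_pos p).ne'
  have h2 : (fun t : ℝ => phi (p.1, t)) = fun t : ℝ => 16 / (8 + p.1 ^ 2 + t ^ 2) := rfl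
  rw [h2, hd.deriv]
  show _ = -32 * p.2 / qq p ^ 2
  have h3 : qq p = 8 + p.1 ^ 2 + p.2 ^ 2 := rfl
  rw [h3]; ring

lemma lapP_phi (p : ℝ × ℝ) : lapP phi p = 64 / qq p ^ 2 - 64 / qq p ^ 2 * phi p := by
  have hqne := (qq_pos p).ne'
  have h1 : d1 (d1 phi) p = (-32 * qq p + 128 * p.1 ^ 2) / qq p ^ 3 := by
    rw [d1_phi]
    rw [d1_eq phi1 p ((contDiff_phi1.differentiable (by simp)) p)]
    have hden : HasDerivAt (fun t : ℝ => (8 + t ^ 2 + p.2 ^ 2) ^ 2)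
        (2 * (8 + p.1 ^ 2 + p.2 ^ 2) ^ 1 * (2 * p.1)) p.1 := (hq1 p).pow 2
    have hnum : HasDerivAt (fun t : ℝ => -32 * t) (-32) p.1 := by
      simpa using (hasDerivAt_id p.1).const_mul (-32)
    have hd : HasDerivAt (fun t : ℝ => -32 * t / (8 + t ^ 2 + p.2 ^ 2) ^ 2)
        ((-32 * ((8 + p.1 ^ 2 + p.2 ^ 2) ^ 2) -
            (-32 * p.1) * (2 * (8 + p.1 ^ 2 + p.2 ^ 2) ^ 1 * (2 * p.1))) /
          ((8 + p.1 ^ 2 + p.2 ^ 2) ^ 2) ^ 2) p.1 :=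
      hnum.div hden (pow_ne_zero 2 (qq_pos p).ne')
    have h2 : (fun t : ℝ => phi1 (t, p.2)) = fun t : ℝ => -32 * t / (8 + t ^ 2 + p.2 ^ 2) ^ 2 := rfl
    rw [h2, hd.deriv]
    have h3 : qq p = 8 + p.1 ^ 2 + p.2 ^ 2 := rfl
    rw [← h3]
    field_simp
    ring
  have h2 : d2 (d2 phi) p = (-32 * qq p + 128 * p.2 ^ 2) / qq p ^ 3 := by
    rw [d2_phi]
    rw [d2_eq phi2 p ((contDiff_phi2.differentiable (by simp)) p)]
    have hden : HasDerivAt (fun t : ℝ => (8 + p.1 ^ 2 + t ^ 2) ^ 2)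
        (2 * (8 + p.1 ^ 2 + p.2 ^ 2) ^ 1 * (2 * p.2)) p.2 := (hq2 p).pow 2
    have hnum : HasDerivAt (fun t : ℝ => -32 * t) (-32) p.2 := by
      simpa using (hasDerivAt_id p.2).const_mul (-32)
    have hd : HasDerivAt (fun t : ℝ => -32 * t / (8 + p.1 ^ 2 + t ^ 2) ^ 2)
        ((-32 * ((8 + p.1 ^ 2 + p.2 ^ 2) ^ 2) -
            (-32 * p.2) * (2 * (8 + p.1 ^ 2 + p.2 ^ 2) ^ 1 * (2 * p.2))) /
          ((8 + p.1 ^ 2 + p.2 ^ 2) ^ 2) ^ 2) p.2 :=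
      hnum.div hden (pow_ne_zero 2 (qq_pos p).ne')
    have h2' : (fun t : ℝ => phi2 (p.1, t)) = fun t : ℝ => -32 * t / (8 + p.1 ^ 2 + t ^ 2) ^ 2 := rfl
    rw [h2', hd.deriv]
    have h3 : qq p = 8 + p.1 ^ 2 + p.2 ^ 2 := rfl
    rw [← h3]
    field_simp
    ring
  have hsum : p.1 ^ 2 + p.2 ^ 2 = qq p - 8 := by
    have h3 : qq p = 8 + p.1 ^ 2 + p.2 ^ 2 := rfl
    rw [h3]; ring
  have key : (-32 * qq p + 128 * p.1 ^ 2) + (-32 * qq p + 128 * p.2 ^ 2)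
      = 64 * qq p - 1024 := by linear_combination 128 * hsum
  show d1 (d1 phi) p + d2 (d2 phi) p = _
  rw [h1, h2, phi, ← add_div, key]
  field_simp
  ring

open Set Filter Metric

lemma cont_d1 {f : ℝ × ℝ → ℝ} (hf : ContDiff ℝ 1 f) : Continuous (d1 f) :=
  ((hf.fderiv_right (m := 0) (by norm_num)).continuous).clm_apply continuous_const

lemma cont_d2 {f : ℝ × ℝ → ℝ} (hf : ContDiff ℝ 1 f) : Continuous (d2 f) :=
  ((hf.fderiv_right (m := 0) (by norm_num)).continuous).clm_apply continuous_const

lemma contDiff_d1 {f : ℝ × ℝ → ℝ} (hf : ContDiff ℝ 2 f) : ContDiff ℝ 1 (d1 f) :=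
  (hf.fderiv_right (by norm_num)).clm_apply contDiff_const

lemma contDiff_d2 {f : ℝ × ℝ → ℝ} (hf : ContDiff ℝ 2 f) : ContDiff ℝ 1 (d2 f) :=
  (hf.fderiv_right (by norm_num)).clm_apply contDiff_const

lemma d1_zero_of_nmem {f : ℝ × ℝ → ℝ} {p : ℝ × ℝ} (hp : p ∉ tsupport f) : d1 f p = 0 := by
  have : fderiv ℝ f p = 0 := by
    by_contra h
    exact hp (support_fderiv_subset ℝ (by simpa using h))
  simp [d1, this]

lemma d2_zero_of_nmem {f : ℝ × ℝ → ℝ} {p : ℝ × ℝ} (hp : p ∉ tsupport f) : d2 f p = 0 := by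
  have : fderiv ℝ f p = 0 := by
    by_contra h
    exact hp (support_fderiv_subset ℝ (by simpa using h))
  simp [d2, this]

lemma div_int_zero (f g : ℝ × ℝ → ℝ) (hf : ContDiff ℝ 1 f) (hg : ContDiff ℝ 1 g)
    (hcf : HasCompactSupport f) (hcg : HasCompactSupport g) :
    ∫ p : ℝ × ℝ, (d1 f p + d2 g p) = 0 := by
  obtain ⟨L0, hL0⟩ := ((hcf.isCompact.union hcg.isCompact).isBounded).subset_closedBall (0 : ℝ × ℝ)
  set L : ℝ := max L0 0 + 1 with hL
  have hLpos : 0 < L := by positivity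
  have hsupp : tsupport f ∪ tsupport g ⊆ ball (0 : ℝ × ℝ) L := by
    refine hL0.trans (closedBall_subset_ball ?_)
    have := le_max_left L0 (0:ℝ); rw [hL]; linarith
  set a : ℝ × ℝ := (-L, -L) with ha
  set b : ℝ × ℝ := (L, L) with hb
  have hle : a ≤ b := ⟨by simp [ha, hb]; linarith, by simp [ha, hb]; linarith⟩
  have hball_sub : ball (0 : ℝ × ℝ) L ⊆ Icc a b := by
    intro p hp
    rw [mem_ball_zero_iff, Prod.norm_def] at hp
    have h1 : |p.1| < L := lt_of_le_of_lt (le_max_left _ _) (by simpa [Real.norm_eq_abs] using hp)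
    have h2 : |p.2| < L := lt_of_le_of_lt (le_max_right _ _) (by simpa [Real.norm_eq_abs] using hp)
    rw [abs_lt] at h1 h2
    exact ⟨⟨by simp [ha]; linarith, by simp [ha]; linarith⟩,
           ⟨by simp [hb]; linarith, by simp [hb]; linarith⟩⟩
  have hedge : ∀ p : ℝ × ℝ, L ≤ |p.1| ∨ L ≤ |p.2| → p ∉ ball (0 : ℝ × ℝ) L := by
    intro p hp hmem
    rw [mem_ball_zero_iff, Prod.norm_def] at hmem
    rcases hp with h | h
    · exact absurd (lt_of_le_of_lt (le_max_left _ _) (by simpa [Real.norm_eq_abs] using hmem))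
        (not_lt.2 h)
    · exact absurd (lt_of_le_of_lt (le_max_right _ _) (by simpa [Real.norm_eq_abs] using hmem))
        (not_lt.2 h)
  have hfz : ∀ p : ℝ × ℝ, L ≤ |p.1| ∨ L ≤ |p.2| → f p = 0 := fun p hp =>
    image_eq_zero_of_notMem_tsupport (fun h => hedge p hp (hsupp (Or.inl h)))
  have hgz : ∀ p : ℝ × ℝ, L ≤ |p.1| ∨ L ≤ |p.2| → g p = 0 := fun p hp =>
    image_eq_zero_of_notMem_tsupport (fun h => hedge p hp (hsupp (Or.inr h)))
  have habs : |L| = L := abs_of_pos hLpos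
  have habs' : |(-L)| = L := by rw [abs_neg, habs]
  have key := integral_divergence_prod_Icc_of_hasFDerivAt_off_countable_of_le f g
      (fderiv ℝ f) (fderiv ℝ g) a b hle ∅ countable_empty
      (hf.continuous.continuousOn) (hg.continuous.continuousOn)
      (fun x _ => (hf.differentiable one_ne_zero x).hasFDerivAt)
      (fun x _ => (hg.differentiable one_ne_zero x).hasFDerivAt)
      (((cont_d1 hf).add (cont_d2 hg)).continuousOn.integrableOn_compact isCompact_Icc)
  have e1 : (∫ x in a.1..b.1, g (x, b.2)) = 0 := by
    rw [intervalIntegral.integral_congr (g := fun _ => (0:ℝ))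
      (fun x _ => hgz (x, b.2) (Or.inr (by simp [hb, habs])))]
    simp
  have e2 : (∫ x in a.1..b.1, g (x, a.2)) = 0 := by
    rw [intervalIntegral.integral_congr (g := fun _ => (0:ℝ))
      (fun x _ => hgz (x, a.2) (Or.inr (by simp [ha, habs'])))]
    simp
  have e3 : (∫ y in a.2..b.2, f (b.1, y)) = 0 := by
    rw [intervalIntegral.integral_congr (g := fun _ => (0:ℝ))
      (fun y _ => hfz (b.1, y) (Or.inl (by simp [hb, habs])))]
    simp
  have e4 : (∫ y in a.2..b.2, f (a.1, y)) = 0 := by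
    rw [intervalIntegral.integral_congr (g := fun _ => (0:ℝ))
      (fun y _ => hfz (a.1, y) (Or.inl (by simp [ha, habs'])))]
    simp
  rw [e1, e2, e3, e4] at key
  have hzero_out : ∀ p : ℝ × ℝ, p ∉ Icc a b → d1 f p + d2 g p = 0 := by
    intro p hp
    have hpb : p ∉ ball (0 : ℝ × ℝ) L := fun h => hp (hball_sub h)
    rw [d1_zero_of_nmem (fun h => hpb (hsupp (Or.inl h))),
        d2_zero_of_nmem (fun h => hpb (hsupp (Or.inr h))), add_zero]
  rw [← setIntegral_eq_integral_of_forall_compl_eq_zero hzero_out]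
  simpa [d1, d2] using key

open Set Filter Metric

noncomputable def eL : (ℝ × ℝ) ≃L[ℝ] EuclideanSpace ℝ (Fin 2) :=
  (ContinuousLinearEquiv.finTwoArrow ℝ ℝ).symm.trans
    (PiLp.continuousLinearEquiv 2 ℝ (fun _ : Fin 2 => ℝ)).symm

example (p : ℝ × ℝ) : eL p 0 = p.1 := rfl
example (p : ℝ × ℝ) : eL p 1 = p.2 := rfl

lemma eL10 : eL (1, 0) = EuclideanSpace.single (0 : Fin 2) (1 : ℝ) := by
  ext i
  fin_cases i <;> simp [eL, EuclideanSpace.single]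

lemma eL01 : eL (0, 1) = EuclideanSpace.single (1 : Fin 2) (1 : ℝ) := by
  ext i
  fin_cases i <;> simp [eL, EuclideanSpace.single]

lemma norm_eL_sq (p : ℝ × ℝ) : ‖eL p‖ ^ 2 = p.1 ^ 2 + p.2 ^ 2 := by
  rw [EuclideanSpace.norm_eq, Real.sq_sqrt (by positivity)]
  simp [Fin.sum_univ_two]
  rfl

noncomputable def mE : EuclideanSpace ℝ (Fin 2) ≃ᵐ ℝ × ℝ :=
  (MeasurableEquiv.toLp 2 (Fin 2 → ℝ)).symm.trans (MeasurableEquiv.finTwoArrow)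

lemma hmE : MeasurePreserving mE :=
  (volume_preserving_finTwoArrow ℝ).comp (EuclideanSpace.volume_preserving_symm_measurableEquiv_toLp (Fin 2))

lemma mE_symm_eq (p : ℝ × ℝ) : mE.symm p = eL p := by
  ext i
  fin_cases i <;> rfl

lemma integral_transfer (h : EuclideanSpace ℝ (Fin 2) → ℝ) :
    ∫ x, h x = ∫ p : ℝ × ℝ, h (eL p) := by
  rw [← MeasurePreserving.integral_comp (hmE.symm mE) mE.symm.measurableEmbedding h]
  simp only [mE_symm_eq]

lemma lap_transfer (u : EuclideanSpace ℝ (Fin 2) → ℝ) (hu : ContDiff ℝ 2 u) (p : ℝ × ℝ) :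
    lapP (fun y => u (eL y)) p = lap2 u (eL p) := by
  have hdiff : Differentiable ℝ u := hu.differentiable (by norm_num)
  have hA : ContDiff ℝ 1 (fun x => fderiv ℝ u x (EuclideanSpace.single (0 : Fin 2) (1 : ℝ))) :=
    (hu.fderiv_right (m := 1) (by norm_num)).clm_apply contDiff_const
  have hB : ContDiff ℝ 1 (fun x => fderiv ℝ u x (EuclideanSpace.single (1 : Fin 2) (1 : ℝ))) :=
    (hu.fderiv_right (m := 1) (by norm_num)).clm_apply contDiff_const
  have hcomp : ∀ (w : EuclideanSpace ℝ (Fin 2) → ℝ), Differentiable ℝ w → ∀ (y : ℝ × ℝ) (v : ℝ × ℝ),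
      fderiv ℝ (fun z => w (eL z)) y v = fderiv ℝ w (eL y) (eL v) := by
    intro w hw y v
    have : fderiv ℝ (fun z => w (eL z)) y = (fderiv ℝ w (eL y)).comp (eL : (ℝ × ℝ) →L[ℝ] _) := by
      rw [show (fun z => w (eL z)) = w ∘ eL from rfl,
        fderiv_comp y (hw _) (eL.differentiableAt), eL.fderiv]
    rw [this]; rfl
  have h1 : d1 (fun y => u (eL y)) = fun y =>
      fderiv ℝ u (eL y) (EuclideanSpace.single (0 : Fin 2) (1 : ℝ)) := by
    funext y; rw [d1, hcomp u hdiff y (1, 0), eL10]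
  have h2 : d2 (fun y => u (eL y)) = fun y =>
      fderiv ℝ u (eL y) (EuclideanSpace.single (1 : Fin 2) (1 : ℝ)) := by
    funext y; rw [d2, hcomp u hdiff y (0, 1), eL01]
  have e1 : d1 (d1 fun y => u (eL y)) p =
      fderiv ℝ (fun x => fderiv ℝ u x (EuclideanSpace.single (0 : Fin 2) (1 : ℝ))) (eL p)
        (EuclideanSpace.single (0 : Fin 2) (1 : ℝ)) := by
    rw [h1, d1, hcomp _ (hA.differentiable one_ne_zero) p (1, 0), eL10]
  have e2 : d2 (d2 fun y => u (eL y)) p =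
      fderiv ℝ (fun x => fderiv ℝ u x (EuclideanSpace.single (1 : Fin 2) (1 : ℝ))) (eL p)
        (EuclideanSpace.single (1 : Fin 2) (1 : ℝ)) := by
    rw [h2, d2, hcomp _ (hB.differentiable one_ne_zero) p (0, 1), eL01]
  rw [lapP, e1, e2, lap2, Fin.sum_univ_two]

open Set Filter Metric

noncomputable def gg (p : ℝ × ℝ) : ℝ := 128 * (Real.log (qq p / 8)) ^ 2 / qq p ^ 2

lemma radial_int (F : ℝ → ℝ) :
    ∫ p : ℝ × ℝ, F (qq p) = (∫ r in Ioi (0:ℝ), r * F (8 + r ^ 2)) * (2 * π) := by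
  rw [← integral_comp_polarCoord_symm (fun p => F (qq p))]
  have htarget : polarCoord.target = Ioi (0:ℝ) ×ˢ Ioo (-π) π := rfl
  have hqq : ∀ p : ℝ × ℝ, qq (polarCoord.symm p) = 8 + p.1 ^ 2 := by
    intro p
    show 8 + (p.1 * cos p.2) ^ 2 + (p.1 * sin p.2) ^ 2 = 8 + p.1 ^ 2
    nlinarith [sin_sq_add_cos_sq p.2]
  have hint : ∀ p : ℝ × ℝ, p.1 • F (qq (polarCoord.symm p)) =
      (fun r => r * F (8 + r ^ 2)) p.1 * (fun _ : ℝ => (1:ℝ)) p.2 := by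
    intro p; rw [hqq]; simp [smul_eq_mul]
  rw [htarget]
  rw [setIntegral_congr_fun (by measurability) (fun p _ => hint p)]
  have h3 := MeasureTheory.setIntegral_prod_mul (μ := (volume : Measure ℝ))
    (ν := (volume : Measure ℝ)) (fun r : ℝ => r * F (8 + r ^ 2)) (fun _ : ℝ => (1:ℝ))
    (Ioi 0) (Ioo (-π) π)
  rw [Measure.volume_eq_prod, h3]
  have h2 : ∫ _ in Ioo (-π) π, (1:ℝ) = 2 * π := by
    simp [Real.volume_Ioo]
    rw [max_eq_left (by positivity)]
    ring
  rw [h2]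

lemma tendsto_u : Tendsto (fun r : ℝ => (8 + r ^ 2) / 8) atTop atTop := by
  apply Tendsto.atTop_div_const (by norm_num)
  exact tendsto_atTop_add_const_left _ 8 (tendsto_pow_atTop (by norm_num))

lemma hasDerivAt_u (r : ℝ) : HasDerivAt (fun r : ℝ => (8 + r ^ 2) / 8) (r / 4) r := by
  have : HasDerivAt (fun r : ℝ => 8 + r ^ 2) (2 * r) r := by
    simpa using (hasDerivAt_pow 2 r).const_add 8
  exact (this.div_const 8).congr_deriv (by ring)

lemma u_pos (r : ℝ) : 0 < (8 + r ^ 2) / 8 := by positivity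

lemma hL (r : ℝ) : HasDerivAt (fun s : ℝ => Real.log ((8 + s ^ 2) / 8))
    (((8 + r ^ 2) / 8)⁻¹ * (r / 4)) r :=
  by have := (Real.hasDerivAt_log (u_pos r).ne').comp r (hasDerivAt_u r); exact this

lemma tA : Tendsto (fun x : ℝ => Real.log x ^ 2 / x) atTop (𝓝 0) := by
  simpa using Real.tendsto_pow_log_div_mul_add_atTop 1 0 2 one_ne_zero

lemma tB : Tendsto (fun x : ℝ => Real.log x / x) atTop (𝓝 0) := by
  simpa using Real.tendsto_pow_log_div_mul_add_atTop 1 0 1 one_ne_zero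

lemma tC : Tendsto (fun x : ℝ => 1 / x) atTop (𝓝 (0:ℝ)) :=
  tendsto_const_nhds.div_atTop tendsto_id

lemma J1 : ∫ r in Ioi (0:ℝ),
    r * (128 * (Real.log ((8 + r ^ 2) / 8)) ^ 2 / (8 + r ^ 2) ^ 2) = 16 := by
  set H : ℝ → ℝ := fun r =>
    -8 * ((Real.log ((8 + r ^ 2) / 8)) ^ 2 + 2 * Real.log ((8 + r ^ 2) / 8) + 2)
      / ((8 + r ^ 2) / 8) with hH
  have hder : ∀ r ∈ Ici (0:ℝ), HasDerivAt H
      (r * (128 * (Real.log ((8 + r ^ 2) / 8)) ^ 2 / (8 + r ^ 2) ^ 2)) r := by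
    intro r _
    have hnum : HasDerivAt (fun s : ℝ =>
        -8 * ((Real.log ((8 + s ^ 2) / 8)) ^ 2 + 2 * Real.log ((8 + s ^ 2) / 8) + 2))
        (-8 * (2 * (Real.log ((8 + r ^ 2) / 8)) ^ 1 * (((8 + r ^ 2) / 8)⁻¹ * (r / 4))
          + 2 * (((8 + r ^ 2) / 8)⁻¹ * (r / 4)))) r :=
      ((((hL r).pow 2).add ((hL r).const_mul 2)).add_const 2).const_mul (-8)
    have hd := hnum.div (hasDerivAt_u r) (u_pos r).ne'
    refine hd.congr_deriv ?_
    have h1 : (0:ℝ) < 8 + r ^ 2 := by positivity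
    field_simp
    ring
  have hbase : Tendsto (fun x : ℝ => -8 * ((Real.log x) ^ 2 + 2 * Real.log x + 2) / x)
      atTop (𝓝 0) := by
    have h := ((tA.const_mul (-8)).add (tB.const_mul (-16))).add (tC.const_mul (-16))
    rw [show (-8 * 0 + -16 * 0 + -16 * 0 : ℝ) = 0 by ring] at h
    apply h.congr'
    filter_upwards [eventually_gt_atTop (0:ℝ)] with x hx
    field_simp
    ring
  have hlim : Tendsto H atTop (𝓝 0) := by
    have := hbase.comp tendsto_u
    simpa [Function.comp_def, hH] using this
  have hpos : ∀ r ∈ Ioi (0:ℝ),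
      0 ≤ r * (128 * (Real.log ((8 + r ^ 2) / 8)) ^ 2 / (8 + r ^ 2) ^ 2) := by
    intro r hr
    have : (0:ℝ) < r := hr
    positivity
  have := integral_Ioi_of_hasDerivAt_of_nonneg' hder hpos hlim
  rw [this, hH]
  norm_num

lemma J2 : ∫ r in Ioi (0:ℝ),
    r * (16 / (8 + r ^ 2) * (128 * (Real.log ((8 + r ^ 2) / 8)) ^ 2 / (8 + r ^ 2) ^ 2)) = 4 := by
  set H : ℝ → ℝ := fun r =>
    -8 * ((Real.log ((8 + r ^ 2) / 8)) ^ 2 + Real.log ((8 + r ^ 2) / 8) + 1/2)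
      / ((8 + r ^ 2) / 8) ^ 2 with hH
  have hder : ∀ r ∈ Ici (0:ℝ), HasDerivAt H
      (r * (16 / (8 + r ^ 2) * (128 * (Real.log ((8 + r ^ 2) / 8)) ^ 2 / (8 + r ^ 2) ^ 2))) r := by
    intro r _
    have hnum : HasDerivAt (fun s : ℝ =>
        -8 * ((Real.log ((8 + s ^ 2) / 8)) ^ 2 + Real.log ((8 + s ^ 2) / 8) + 1/2))
        (-8 * (2 * (Real.log ((8 + r ^ 2) / 8)) ^ 1 * (((8 + r ^ 2) / 8)⁻¹ * (r / 4))
          + ((8 + r ^ 2) / 8)⁻¹ * (r / 4))) r :=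
      ((((hL r).pow 2).add (hL r)).add_const (1/2)).const_mul (-8)
    have hden : HasDerivAt (fun s : ℝ => ((8 + s ^ 2) / 8) ^ 2)
        (2 * ((8 + r ^ 2) / 8) ^ 1 * (r / 4)) r := (hasDerivAt_u r).pow 2
    have hd := hnum.div hden (pow_ne_zero 2 (u_pos r).ne')
    refine hd.congr_deriv ?_
    have h1 : (0:ℝ) < 8 + r ^ 2 := by positivity
    field_simp
    ring
  have hbase : Tendsto (fun x : ℝ =>
      -8 * ((Real.log x) ^ 2 + Real.log x + 1/2) / x ^ 2) atTop (𝓝 0) := by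
    have h := (((tA.mul tC).const_mul (-8)).add ((tB.mul tC).const_mul (-8))).add
      ((tC.mul tC).const_mul (-4))
    rw [show (-8 * (0*0) + -8 * (0*0) + -4 * (0*0) : ℝ) = 0 by ring] at h
    apply h.congr'
    filter_upwards [eventually_gt_atTop (0:ℝ)] with x hx
    field_simp
    ring
  have hlim : Tendsto H atTop (𝓝 0) := by
    have := hbase.comp tendsto_u
    simpa [Function.comp_def, hH] using this
  have hpos : ∀ r ∈ Ioi (0:ℝ),
      0 ≤ r * (16 / (8 + r ^ 2) * (128 * (Real.log ((8 + r ^ 2) / 8)) ^ 2 / (8 + r ^ 2) ^ 2)) := by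
    intro r hr
    have : (0:ℝ) < r := hr
    positivity
  have := integral_Ioi_of_hasDerivAt_of_nonneg' hder hpos hlim
  rw [this, hH]
  norm_num

lemma int_gg : ∫ p : ℝ × ℝ, gg p = 32 * π := by
  have hr := radial_int (fun t : ℝ => 128 * (Real.log (t / 8)) ^ 2 / t ^ 2)
  beta_reduce at hr
  simp only [gg]
  rw [hr, J1]
  ring

lemma int_phigg : ∫ p : ℝ × ℝ, phi p * gg p = 8 * π := by
  have hr := radial_int (fun t : ℝ => 16 / t * (128 * (Real.log (t / 8)) ^ 2 / t ^ 2))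
  beta_reduce at hr
  simp only [phi, gg]
  rw [hr, J2]
  ring

open Set Filter Metric

lemma qq_ge8 (p : ℝ × ℝ) : 8 ≤ qq p := by
  have := sq_nonneg p.1; have := sq_nonneg p.2; simp only [qq]; nlinarith

lemma norm_sq_le (p : ℝ × ℝ) : ‖p‖ ^ 2 ≤ p.1 ^ 2 + p.2 ^ 2 := by
  have h : ‖p‖ = max ‖p.1‖ ‖p.2‖ := rfl
  rcases max_choice ‖p.1‖ ‖p.2‖ with h1 | h1 <;> rw [h, h1] <;>
    simp only [Real.norm_eq_abs, sq_abs] <;>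
    nlinarith [sq_abs p.1, sq_abs p.2, sq_nonneg p.1, sq_nonneg p.2]

lemma qq_ge_norm (p : ℝ × ℝ) : 8 + ‖p‖ ^ 2 ≤ qq p := by
  have := norm_sq_le p; simp only [qq]; linarith

lemma one_add_norm_sq_le (p : ℝ × ℝ) : (1 + ‖p‖) ^ 2 ≤ 2 * qq p := by
  have h1 := qq_ge_norm p
  have h2 := norm_nonneg p
  nlinarith [sq_nonneg (1 - ‖p‖)]

lemma integrable_decay (K : ℝ) (f : ℝ × ℝ → ℝ) (hf : Continuous f)
    (hK : ∀ p, |f p| ≤ K / (1 + ‖p‖) ^ 3) : Integrable f := by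
  have h2 : (Module.finrank ℝ (ℝ × ℝ) : ℝ) < 3 := by
    rw [Module.finrank_prod]
    norm_num
  have hi := (integrable_one_add_norm (E := ℝ × ℝ) (μ := volume) h2).const_mul K
  refine hi.mono' hf.aestronglyMeasurable (Eventually.of_forall fun p => ?_)
  rw [Real.norm_eq_abs]
  refine (hK p).trans (le_of_eq ?_)
  have hpos : (0:ℝ) < 1 + ‖p‖ := by positivity
  rw [Real.rpow_neg hpos.le, div_eq_mul_inv]
  congr 1
  rw [show (3:ℝ) = ((3:ℕ):ℝ) by norm_num, Real.rpow_natCast]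

lemma gg_nonneg (p : ℝ × ℝ) : 0 ≤ gg p := by
  have := qq_pos p; simp only [gg]; positivity

lemma gg_decay (p : ℝ × ℝ) : |gg p| ≤ 8192 / (1 + ‖p‖) ^ 3 := by
  set q := qq p with hqdef
  set n := ‖p‖ with hndef
  have hq8 : (8:ℝ) ≤ q := qq_ge8 p
  have hq0 : (0:ℝ) < q := qq_pos p
  have hn0 : (0:ℝ) ≤ n := norm_nonneg p
  set L : ℝ := Real.log (q / 8) with hLdef
  set s : ℝ := Real.sqrt q with hsdef
  set b : ℝ := Real.sqrt (Real.sqrt (q / 8)) with hbdef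
  have hs0 : 0 ≤ s := Real.sqrt_nonneg q
  have hs2 : s ^ 2 = q := Real.sq_sqrt hq0.le
  have hq8' : (1:ℝ) ≤ q / 8 := by rw [le_div_iff₀ (by norm_num : (0:ℝ) < 8)]; linarith
  have hb2 : b ^ 2 = Real.sqrt (q / 8) := Real.sq_sqrt (Real.sqrt_nonneg _)
  have hb4 : (b ^ 2) ^ 2 = q / 8 := by rw [hb2]; exact Real.sq_sqrt (by positivity)
  have hb1 : (1:ℝ) ≤ b := by
    rw [hbdef]
    refine Real.one_le_sqrt.2 (Real.one_le_sqrt.2 hq8')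
  have hb0 : (0:ℝ) < b := by linarith
  have hL4 : L = 4 * Real.log b := by
    rw [hLdef, show q / 8 = b ^ 4 by nlinarith [hb4], Real.log_pow]
    norm_num
  have hlogb0 : 0 ≤ Real.log b := Real.log_nonneg hb1
  have hlogb : Real.log b ≤ b := by
    have := Real.log_le_sub_one_of_pos hb0; linarith
  have hL0 : 0 ≤ L := by rw [hL4]; positivity
  have hL2 : L ^ 2 ≤ 16 * b ^ 2 := by rw [hL4]; nlinarith
  have hb2s : b ^ 2 ≤ s := by
    rw [hb2, hsdef]
    exact Real.sqrt_le_sqrt (by linarith)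
  have hL2s : L ^ 2 ≤ 16 * s := by linarith
  have h2q : (1 + n) ^ 2 ≤ 2 * q := one_add_norm_sq_le p
  have h2s : 1 + n ≤ 2 * s := by nlinarith [sq_nonneg (2 * s - (1 + n)), sq_nonneg (2 * s + (1 + n))]
  have hcube : (1 + n) ^ 3 ≤ 4 * q * s := by nlinarith
  have habs : |gg p| = 128 * L ^ 2 / q ^ 2 := by
    rw [abs_of_nonneg (gg_nonneg p)]; rfl
  rw [habs, div_le_div_iff₀ (by positivity) (by positivity)]
  nlinarith [mul_le_mul hL2s hcube (by positivity) (by positivity), hs2, sq_nonneg s]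

lemma d1_mul {f g : ℝ × ℝ → ℝ} {p : ℝ × ℝ} (hf : DifferentiableAt ℝ f p)
    (hg : DifferentiableAt ℝ g p) :
    d1 (fun x => f x * g x) p = d1 f p * g p + f p * d1 g p := by
  simp only [d1]
  rw [fderiv_fun_mul hf hg]
  simp only [ContinuousLinearMap.add_apply, ContinuousLinearMap.smul_apply, smul_eq_mul]
  ring

lemma d2_mul {f g : ℝ × ℝ → ℝ} {p : ℝ × ℝ} (hf : DifferentiableAt ℝ f p)
    (hg : DifferentiableAt ℝ g p) :
    d2 (fun x => f x * g x) p = d2 f p * g p + f p * d2 g p := by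
  simp only [d2]
  rw [fderiv_fun_mul hf hg]
  simp only [ContinuousLinearMap.add_apply, ContinuousLinearMap.smul_apply, smul_eq_mul]
  ring

lemma d1_sub {f g : ℝ × ℝ → ℝ} {p : ℝ × ℝ} (hf : DifferentiableAt ℝ f p)
    (hg : DifferentiableAt ℝ g p) :
    d1 (fun x => f x - g x) p = d1 f p - d1 g p := by
  simp only [d1]
  rw [fderiv_fun_sub hf hg]
  simp

lemma d2_sub {f g : ℝ × ℝ → ℝ} {p : ℝ × ℝ} (hf : DifferentiableAt ℝ f p)
    (hg : DifferentiableAt ℝ g p) :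
    d2 (fun x => f x - g x) p = d2 f p - d2 g p := by
  simp only [d2]
  rw [fderiv_fun_sub hf hg]
  simp

noncomputable def bb : ContDiffBump (0 : ℝ × ℝ) := ⟨1, 2, one_pos, one_lt_two⟩

noncomputable def B : ℝ × ℝ → ℝ := fun x => bb x

lemma B_contDiff : ContDiff ℝ 2 B := bb.contDiff

lemma B_compactSupport : HasCompactSupport B := bb.hasCompactSupport

lemma tsupport_d1_subset (f : ℝ × ℝ → ℝ) : tsupport (d1 f) ⊆ tsupport f := by
  refine closure_minimal (fun y hy => ?_) (isClosed_tsupport f)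
  by_contra h
  exact Function.mem_support.mp hy (d1_zero_of_nmem h)

lemma tsupport_d2_subset (f : ℝ × ℝ → ℝ) : tsupport (d2 f) ⊆ tsupport f := by
  refine closure_minimal (fun y hy => ?_) (isClosed_tsupport f)
  by_contra h
  exact Function.mem_support.mp hy (d2_zero_of_nmem h)

lemma hcs_d1B : HasCompactSupport (d1 B) :=
  HasCompactSupport.of_support_subset_isCompact B_compactSupport.isCompact
    ((subset_tsupport _).trans (tsupport_d1_subset B))

lemma hcs_d2B : HasCompactSupport (d2 B) :=
  HasCompactSupport.of_support_subset_isCompact B_compactSupport.isCompact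
    ((subset_tsupport _).trans (tsupport_d2_subset B))

lemma hcs_d11B : HasCompactSupport (d1 (d1 B)) :=
  HasCompactSupport.of_support_subset_isCompact B_compactSupport.isCompact
    ((subset_tsupport _).trans ((tsupport_d1_subset _).trans (tsupport_d1_subset B)))

lemma hcs_d22B : HasCompactSupport (d2 (d2 B)) :=
  HasCompactSupport.of_support_subset_isCompact B_compactSupport.isCompact
    ((subset_tsupport _).trans ((tsupport_d2_subset _).trans (tsupport_d2_subset B)))

lemma B_flat_inner {x : ℝ × ℝ} (hx : ‖x‖ < 1) :
    d1 B x = 0 ∧ d2 B x = 0 ∧ d1 (d1 B) x = 0 ∧ d2 (d2 B) x = 0 := by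
  have hfd : ∀ y ∈ ball (0 : ℝ × ℝ) 1, fderiv ℝ B y = 0 := by
    intro y hy
    have h1 : B =ᶠ[𝓝 y] fun _ => (1:ℝ) := bb.eventuallyEq_one_of_mem_ball hy
    rw [h1.fderiv_eq, fderiv_fun_const]
    simp
  have hmem : x ∈ ball (0 : ℝ × ℝ) 1 := mem_ball_zero_iff.2 hx
  have h1 : d1 B x = 0 := by simp [d1, hfd x hmem]
  have h2 : d2 B x = 0 := by simp [d2, hfd x hmem]
  have hev1 : d1 B =ᶠ[𝓝 x] fun _ => (0:ℝ) := by
    filter_upwards [isOpen_ball.mem_nhds hmem] with y hy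
    simp [d1, hfd y hy]
  have hev2 : d2 B =ᶠ[𝓝 x] fun _ => (0:ℝ) := by
    filter_upwards [isOpen_ball.mem_nhds hmem] with y hy
    simp [d2, hfd y hy]
  refine ⟨h1, h2, ?_, ?_⟩
  · show fderiv ℝ (d1 B) x (1, 0) = 0
    rw [hev1.fderiv_eq, fderiv_fun_const]
    simp
  · show fderiv ℝ (d2 B) x (0, 1) = 0
    rw [hev2.fderiv_eq, fderiv_fun_const]
    simp

lemma B_flat_outer {x : ℝ × ℝ} (hx : 2 < ‖x‖) :
    B x = 0 ∧ d1 B x = 0 ∧ d2 B x = 0 ∧ d1 (d1 B) x = 0 ∧ d2 (d2 B) x = 0 := by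
  have hts : x ∉ tsupport B := by
    rw [show tsupport B = closedBall (0 : ℝ × ℝ) 2 from bb.tsupport_eq]
    simp only [mem_closedBall_zero_iff, not_le]
    exact hx
  exact ⟨image_eq_zero_of_notMem_tsupport hts,
    d1_zero_of_nmem (fun h => hts h),
    d2_zero_of_nmem (fun h => hts h),
    d1_zero_of_nmem (fun h => hts (tsupport_d1_subset B h)),
    d2_zero_of_nmem (fun h => hts (tsupport_d2_subset B h))⟩

lemma d1_scale (c : ℝ) (u : ℝ × ℝ → ℝ) (hu : Differentiable ℝ u) (p : ℝ × ℝ) :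
    d1 (fun x => u (c • x)) p = c * d1 u (c • p) := by
  have hid : HasFDerivAt (fun x : ℝ × ℝ => c • x)
      (c • ContinuousLinearMap.id ℝ (ℝ × ℝ)) p := (hasFDerivAt_id p).const_smul c
  have h : HasFDerivAt (fun x : ℝ × ℝ => u (c • x))
      ((fderiv ℝ u (c • p)).comp (c • ContinuousLinearMap.id ℝ (ℝ × ℝ))) p :=
    (hu (c • p)).hasFDerivAt.comp p hid
  rw [d1, h.fderiv]
  show (fderiv ℝ u (c • p)) ((c • ContinuousLinearMap.id ℝ (ℝ × ℝ)) ((1:ℝ), (0:ℝ))) = _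
  have h2 : (c • ContinuousLinearMap.id ℝ (ℝ × ℝ)) ((1:ℝ), (0:ℝ)) = c • ((1:ℝ), (0:ℝ)) := rfl
  rw [h2, (fderiv ℝ u (c • p)).map_smul, smul_eq_mul]
  rfl

lemma d2_scale (c : ℝ) (u : ℝ × ℝ → ℝ) (hu : Differentiable ℝ u) (p : ℝ × ℝ) :
    d2 (fun x => u (c • x)) p = c * d2 u (c • p) := by
  have hid : HasFDerivAt (fun x : ℝ × ℝ => c • x)
      (c • ContinuousLinearMap.id ℝ (ℝ × ℝ)) p := (hasFDerivAt_id p).const_smul c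
  have h : HasFDerivAt (fun x : ℝ × ℝ => u (c • x))
      ((fderiv ℝ u (c • p)).comp (c • ContinuousLinearMap.id ℝ (ℝ × ℝ))) p :=
    (hu (c • p)).hasFDerivAt.comp p hid
  rw [d2, h.fderiv]
  show (fderiv ℝ u (c • p)) ((c • ContinuousLinearMap.id ℝ (ℝ × ℝ)) ((0:ℝ), (1:ℝ))) = _
  have h2 : (c • ContinuousLinearMap.id ℝ (ℝ × ℝ)) ((0:ℝ), (1:ℝ)) = c • ((0:ℝ), (1:ℝ)) := rfl
  rw [h2, (fderiv ℝ u (c • p)).map_smul, smul_eq_mul]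
  rfl

lemma d1_const_mul (k : ℝ) (h : ℝ × ℝ → ℝ) {p : ℝ × ℝ} (hh : DifferentiableAt ℝ h p) :
    d1 (fun x => k * h x) p = k * d1 h p := by
  rw [d1_mul (differentiableAt_const k) hh]
  simp [d1, fderiv_const]

lemma d2_const_mul (k : ℝ) (h : ℝ × ℝ → ℝ) {p : ℝ × ℝ} (hh : DifferentiableAt ℝ h p) :
    d2 (fun x => k * h x) p = k * d2 h p := by
  rw [d2_mul (differentiableAt_const k) hh]
  simp [d2, fderiv_const]

lemma abs_integral_le (f : ℝ × ℝ → ℝ) (hmeas : AEStronglyMeasurable f volume)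
    (M E : ℝ) (hE : 0 ≤ E) (hM : ∀ p, |f p| ≤ M)
    (hz : ∀ p : ℝ × ℝ, p ∉ Icc ((-E, -E) : ℝ × ℝ) ((E, E) : ℝ × ℝ) → f p = 0) :
    |∫ p : ℝ × ℝ, f p| ≤ M * (2 * E) ^ 2 := by
  rw [← setIntegral_eq_integral_of_forall_compl_eq_zero hz]
  have hIcc : (Icc ((-E, -E) : ℝ × ℝ) ((E, E) : ℝ × ℝ))
      = Icc (-E) E ×ˢ Icc (-E) E := Icc_prod_eq _ _
  have hvol : volume (Icc ((-E, -E) : ℝ × ℝ) ((E, E) : ℝ × ℝ)) = ENNReal.ofReal ((2 * E) ^ 2) := by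
    rw [hIcc, Measure.volume_eq_prod, Measure.prod_prod, Real.volume_Icc,
      ← ENNReal.ofReal_mul (by linarith)]
    congr 1
    ring
  have hfin : volume (Icc ((-E, -E) : ℝ × ℝ) ((E, E) : ℝ × ℝ)) < ⊤ := by
    rw [hvol]; exact ENNReal.ofReal_lt_top
  have := norm_setIntegral_le_of_norm_le_const (μ := volume)
    (s := Icc ((-E, -E) : ℝ × ℝ) ((E, E) : ℝ × ℝ)) (C := M) hfin
    (fun x _ => by rw [Real.norm_eq_abs]; exact hM x)
  rw [Real.norm_eq_abs] at this
  refine this.trans (le_of_eq ?_)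
  rw [Measure.real, hvol, ENNReal.toReal_ofReal (by positivity)]

set_option maxHeartbeats 1600000 in
lemma green_phi (v : ℝ × ℝ → ℝ) (hv : ContDiff ℝ 2 v) (Cv : ℝ) (hCv : 0 ≤ Cv)
    (hvb : ∀ p, |v p| ≤ Cv * (1 + ‖p‖))
    (hG : Integrable (fun p : ℝ × ℝ => phi p * lapP v p - v p * lapP phi p)) :
    ∫ p : ℝ × ℝ, (phi p * lapP v p - v p * lapP phi p) = 0 := by
  obtain ⟨M1, hM1⟩ := hcs_d1B.exists_bound_of_continuous (cont_d1 (B_contDiff.of_le one_le_two))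
  obtain ⟨M1', hM1'⟩ := hcs_d2B.exists_bound_of_continuous (cont_d2 (B_contDiff.of_le one_le_two))
  obtain ⟨M2, hM2⟩ := hcs_d11B.exists_bound_of_continuous (cont_d1 (contDiff_d1 B_contDiff))
  obtain ⟨M2', hM2'⟩ := hcs_d22B.exists_bound_of_continuous (cont_d2 (contDiff_d2 B_contDiff))
  have hM1_0 : 0 ≤ M1 := (norm_nonneg _).trans (hM1 0)
  have hM1'_0 : 0 ≤ M1' := (norm_nonneg _).trans (hM1' 0)
  have hM2_0 : 0 ≤ M2 := (norm_nonneg _).trans (hM2 0)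
  have hM2'_0 : 0 ≤ M2' := (norm_nonneg _).trans (hM2' 0)
  set K : ℝ := 48 * Cv * (M2 + M2') + 384 * Cv * (M1 + M1') with hKdef
  have hK0 : 0 ≤ K := by positivity
  set G : ℝ × ℝ → ℝ := fun p => phi p * lapP v p - v p * lapP phi p with hGdef
  have hlapv_cont : Continuous (lapP v) :=
    (cont_d1 (contDiff_d1 hv)).add (cont_d2 (contDiff_d2 hv))
  have hlapphi_cont : Continuous (lapP phi) :=
    (cont_d1 (contDiff_d1 (contDiff_phi.of_le le_top))).add
      (cont_d2 (contDiff_d2 (contDiff_phi.of_le le_top)))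
  have hGcont : Continuous G :=
    ((contDiff_phi.continuous).mul hlapv_cont).sub ((hv.continuous).mul hlapphi_cont)
  have hvd : Differentiable ℝ v := hv.differentiable two_ne_zero
  have hBd : Differentiable ℝ B := B_contDiff.differentiable two_ne_zero
  have hd1B : ContDiff ℝ 1 (d1 B) := contDiff_d1 B_contDiff
  have hd2B : ContDiff ℝ 1 (d2 B) := contDiff_d2 B_contDiff
  have key : ∀ n : ℕ, |∫ p : ℝ × ℝ, B ((((n:ℝ)+1)⁻¹) • p) * G p| ≤ 16 * K / ((n:ℝ)+1) := by
    intro n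
    set R : ℝ := (n:ℝ) + 1 with hRdef
    have hR1 : 1 ≤ R := by rw [hRdef]; have : (0:ℝ) ≤ (n:ℝ) := Nat.cast_nonneg n; linarith
    have hR0 : 0 < R := lt_of_lt_of_le one_pos hR1
    set c : ℝ := R⁻¹ with hcdef
    have hc0 : 0 < c := inv_pos.2 hR0
    have hcR : c * R = 1 := inv_mul_cancel₀ hR0.ne'
    set χ : ℝ × ℝ → ℝ := fun p => B (c • p) with hχdef
    set χ1 : ℝ × ℝ → ℝ := fun p => c * d1 B (c • p) with hχ1def
    set χ2 : ℝ × ℝ → ℝ := fun p => c * d2 B (c • p) with hχ2def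
    set lχ : ℝ × ℝ → ℝ :=
      fun p => c * (c * d1 (d1 B) (c • p)) + c * (c * d2 (d2 B) (c • p)) with hlχdef
    have hnorm_smul : ∀ p : ℝ × ℝ, ‖c • p‖ = c * ‖p‖ := fun p => by
      rw [norm_smul, Real.norm_eq_abs, abs_of_pos hc0]
    have hχd1 : d1 χ = χ1 := funext fun p => d1_scale c B hBd p
    have hχd2 : d2 χ = χ2 := funext fun p => d2_scale c B hBd p
    have hcompd1 : Differentiable ℝ (fun x : ℝ × ℝ => d1 B (c • x)) :=
      (hd1B.differentiable one_ne_zero).comp (differentiable_id.const_smul c)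
    have hcompd2 : Differentiable ℝ (fun x : ℝ × ℝ => d2 B (c • x)) :=
      (hd2B.differentiable one_ne_zero).comp (differentiable_id.const_smul c)
    have hχ1d1 : ∀ p, d1 χ1 p = c * (c * d1 (d1 B) (c • p)) := fun p => by
      rw [hχ1def, d1_const_mul c _ (hcompd1 p), d1_scale c (d1 B) (hd1B.differentiable one_ne_zero) p]
    have hχ2d2 : ∀ p, d2 χ2 p = c * (c * d2 (d2 B) (c • p)) := fun p => by
      rw [hχ2def, d2_const_mul c _ (hcompd2 p), d2_scale c (d2 B) (hd2B.differentiable one_ne_zero) p]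
    have hflat_in : ∀ p : ℝ × ℝ, ‖p‖ < R → χ1 p = 0 ∧ χ2 p = 0 ∧ lχ p = 0 := by
      intro p hp
      have h1 : ‖c • p‖ < 1 := by
        rw [hnorm_smul]
        calc c * ‖p‖ < c * R := by exact mul_lt_mul_of_pos_left hp hc0
        _ = 1 := hcR
      obtain ⟨a1, a2, a3, a4⟩ := B_flat_inner h1
      refine ⟨?_, ?_, ?_⟩
      · show c * d1 B (c • p) = 0
        rw [a1, mul_zero]
      · show c * d2 B (c • p) = 0
        rw [a2, mul_zero]
      · show c * (c * d1 (d1 B) (c • p)) + c * (c * d2 (d2 B) (c • p)) = 0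
        rw [a3, a4]; ring
    have hflat_out : ∀ p : ℝ × ℝ, 2 * R < ‖p‖ → χ p = 0 ∧ χ1 p = 0 ∧ χ2 p = 0 ∧ lχ p = 0 := by
      intro p hp
      have h1 : 2 < ‖c • p‖ := by
        rw [hnorm_smul]
        calc (2:ℝ) = c * (2 * R) := by rw [hcdef]; field_simp
        _ < c * ‖p‖ := by exact mul_lt_mul_of_pos_left hp hc0
      obtain ⟨b0, b1, b2, b3, b4⟩ := B_flat_outer h1
      refine ⟨b0, ?_, ?_, ?_⟩
      · show c * d1 B (c • p) = 0
        rw [b1, mul_zero]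
      · show c * d2 B (c • p) = 0
        rw [b2, mul_zero]
      · show c * (c * d1 (d1 B) (c • p)) + c * (c * d2 (d2 B) (c • p)) = 0
        rw [b3, b4]; ring
    have hsmulC : ContDiff ℝ 2 (fun x : ℝ × ℝ => c • x) := (contDiff_id.const_smul c : ContDiff ℝ 2 _)
    have hχC2 : ContDiff ℝ 2 χ := B_contDiff.comp hsmulC
    have hχ1C : ContDiff ℝ 1 χ1 :=
      contDiff_const.mul (hd1B.comp (hsmulC.of_le (by norm_num)))
    have hχ2C : ContDiff ℝ 1 χ2 :=
      contDiff_const.mul (hd2B.comp (hsmulC.of_le (by norm_num)))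
    set S1 : ℝ × ℝ → ℝ :=
      fun p => χ p * (phi p * d1 v p - v p * phi1 p) - phi p * v p * χ1 p with hS1def
    set S2 : ℝ × ℝ → ℝ :=
      fun p => χ p * (phi p * d2 v p - v p * phi2 p) - phi p * v p * χ2 p with hS2def
    have hS1C : ContDiff ℝ 1 S1 :=
      ((hχC2.of_le one_le_two).mul (((contDiff_phi.of_le le_top).mul (contDiff_d1 hv)).sub
        ((hv.of_le one_le_two).mul (contDiff_phi1.of_le le_top)))).sub
        ((((contDiff_phi.of_le le_top).mul (hv.of_le one_le_two))).mul hχ1C)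
    have hS2C : ContDiff ℝ 1 S2 :=
      ((hχC2.of_le one_le_two).mul (((contDiff_phi.of_le le_top).mul (contDiff_d2 hv)).sub
        ((hv.of_le one_le_two).mul (contDiff_phi2.of_le le_top)))).sub
        ((((contDiff_phi.of_le le_top).mul (hv.of_le one_le_two))).mul hχ2C)
    have hnormIcc : ∀ p : ℝ × ℝ, p ∉ Icc ((-(2*R), -(2*R)) : ℝ × ℝ) ((2*R, 2*R) : ℝ × ℝ) →
        2 * R < ‖p‖ := by
      intro p hp
      by_contra hle
      push_neg at hle
      have h1 : |p.1| ≤ ‖p‖ := by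
        rw [show ‖p‖ = max ‖p.1‖ ‖p.2‖ from rfl]
        exact (le_max_left _ _).trans' (le_of_eq (Real.norm_eq_abs p.1).symm)
      have h2 : |p.2| ≤ ‖p‖ := by
        rw [show ‖p‖ = max ‖p.1‖ ‖p.2‖ from rfl]
        exact (le_max_right _ _).trans' (le_of_eq (Real.norm_eq_abs p.2).symm)
      rw [abs_le] at h1 h2
      exact hp ⟨⟨show -(2*R) ≤ p.1 by linarith [h1.1], show -(2*R) ≤ p.2 by linarith [h2.1]⟩,
        show p.1 ≤ 2*R by linarith [h1.2], show p.2 ≤ 2*R by linarith [h2.2]⟩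
    have hS1s : HasCompactSupport S1 := by
      apply HasCompactSupport.intro (isCompact_closedBall (0 : ℝ × ℝ) (2*R))
      intro p hp
      have h2R : 2*R < ‖p‖ := by
        rw [mem_closedBall_zero_iff, not_le] at hp
        exact hp
      obtain ⟨z0, z1, z2, z3⟩ := hflat_out p h2R
      show χ p * (phi p * d1 v p - v p * phi1 p) - phi p * v p * χ1 p = 0
      rw [z0, z1]; ring
    have hS2s : HasCompactSupport S2 := by
      apply HasCompactSupport.intro (isCompact_closedBall (0 : ℝ × ℝ) (2*R))
      intro p hp
      have h2R : 2*R < ‖p‖ := by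
        rw [mem_closedBall_zero_iff, not_le] at hp
        exact hp
      obtain ⟨z0, z1, z2, z3⟩ := hflat_out p h2R
      show χ p * (phi p * d2 v p - v p * phi2 p) - phi p * v p * χ2 p = 0
      rw [z0, z2]; ring
    set err : ℝ × ℝ → ℝ :=
      fun p => phi p * v p * lχ p + 2 * v p * (phi1 p * χ1 p + phi2 p * χ2 p) with herrdef
    have hdiv : ∀ p : ℝ × ℝ, d1 S1 p + d2 S2 p = χ p * G p - err p := by
      intro p
      have dχ : DifferentiableAt ℝ χ p := (hχC2.differentiable two_ne_zero) p
      have dphi : DifferentiableAt ℝ phi p := (contDiff_phi.differentiable (by simp)) p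
      have dv : DifferentiableAt ℝ v p := hvd p
      have dd1v : DifferentiableAt ℝ (d1 v) p := (contDiff_d1 hv).differentiable one_ne_zero p
      have dd2v : DifferentiableAt ℝ (d2 v) p := (contDiff_d2 hv).differentiable one_ne_zero p
      have dphi1 : DifferentiableAt ℝ phi1 p := (contDiff_phi1.differentiable (by simp)) p
      have dphi2 : DifferentiableAt ℝ phi2 p := (contDiff_phi2.differentiable (by simp)) p
      have dχ1 : DifferentiableAt ℝ χ1 p := hχ1C.differentiable one_ne_zero p
      have dχ2 : DifferentiableAt ℝ χ2 p := hχ2C.differentiable one_ne_zero p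
      have hA : d1 S1 p = (d1 χ p) * (phi p * d1 v p - v p * phi1 p)
          + χ p * ((d1 phi p * d1 v p + phi p * d1 (d1 v) p)
            - (d1 v p * phi1 p + v p * d1 phi1 p))
          - ((d1 phi p * v p + phi p * d1 v p) * χ1 p + (phi p * v p) * d1 χ1 p) := by
        rw [hS1def]
        rw [d1_sub (dχ.fun_mul ((dphi.fun_mul dd1v).fun_sub (dv.fun_mul dphi1))) ((dphi.fun_mul dv).fun_mul dχ1)]
        rw [d1_mul dχ ((dphi.fun_mul dd1v).fun_sub (dv.fun_mul dphi1))]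
        rw [d1_sub (dphi.fun_mul dd1v) (dv.fun_mul dphi1)]
        rw [d1_mul dphi dd1v, d1_mul dv dphi1]
        rw [d1_mul (dphi.fun_mul dv) dχ1, d1_mul dphi dv]
        try ring
      have hB : d2 S2 p = (d2 χ p) * (phi p * d2 v p - v p * phi2 p)
          + χ p * ((d2 phi p * d2 v p + phi p * d2 (d2 v) p)
            - (d2 v p * phi2 p + v p * d2 phi2 p))
          - ((d2 phi p * v p + phi p * d2 v p) * χ2 p + (phi p * v p) * d2 χ2 p) := by
        rw [hS2def]
        rw [d2_sub (dχ.fun_mul ((dphi.fun_mul dd2v).fun_sub (dv.fun_mul dphi2))) ((dphi.fun_mul dv).fun_mul dχ2)]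
        rw [d2_mul dχ ((dphi.fun_mul dd2v).fun_sub (dv.fun_mul dphi2))]
        rw [d2_sub (dphi.fun_mul dd2v) (dv.fun_mul dphi2)]
        rw [d2_mul dphi dd2v, d2_mul dv dphi2]
        rw [d2_mul (dphi.fun_mul dv) dχ2, d2_mul dphi dv]
        try ring
      have e1 : d1 phi p = phi1 p := by rw [d1_phi]
      have e2 : d2 phi p = phi2 p := by rw [d2_phi]
      have e3 : lapP phi p = d1 phi1 p + d2 phi2 p := by
        show d1 (d1 phi) p + d2 (d2 phi) p = _
        rw [d1_phi, d2_phi]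
      have e4 : lapP v p = d1 (d1 v) p + d2 (d2 v) p := rfl
      rw [hA, hB, hχd1, hχd2, e1, e2, hGdef, herrdef, hχ1d1 p, hχ2d2 p, hlχdef]
      simp only []
      rw [e3, e4]
      ring
    have hzero := div_int_zero S1 S2 hS1C hS2C hS1s hS2s
    have hχcont : Continuous χ := B_contDiff.continuous.comp (continuous_id.const_smul c)
    have hχ1cont : Continuous χ1 :=
      continuous_const.mul ((cont_d1 (B_contDiff.of_le one_le_two)).comp
        (continuous_id.const_smul c))
    have hχ2cont : Continuous χ2 :=
      continuous_const.mul ((cont_d2 (B_contDiff.of_le one_le_two)).comp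
        (continuous_id.const_smul c))
    have hlχcont : Continuous lχ := by
      apply Continuous.add
      · exact continuous_const.mul (continuous_const.mul
          ((cont_d1 (contDiff_d1 B_contDiff)).comp (continuous_id.const_smul c)))
      · exact continuous_const.mul (continuous_const.mul
          ((cont_d2 (contDiff_d2 B_contDiff)).comp (continuous_id.const_smul c)))
    have herr_cont : Continuous err := by
      apply Continuous.add
      · exact ((contDiff_phi.continuous).mul (hv.continuous)).mul hlχcont
      · exact (continuous_const.mul (hv.continuous)).mul
          (((contDiff_phi1.continuous).mul hχ1cont).add ((contDiff_phi2.continuous).mul hχ2cont))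
    have herr_supp : HasCompactSupport err := by
      apply HasCompactSupport.intro (isCompact_closedBall (0 : ℝ × ℝ) (2*R))
      intro p hp
      have h2R : 2*R < ‖p‖ := by
        rw [mem_closedBall_zero_iff, not_le] at hp
        exact hp
      obtain ⟨z0, z1, z2, z3⟩ := hflat_out p h2R
      show phi p * v p * lχ p + 2 * v p * (phi1 p * χ1 p + phi2 p * χ2 p) = 0
      rw [z1, z2, z3]; ring
    have herr_int : Integrable err := herr_cont.integrable_of_hasCompactSupport herr_supp
    have hχG_supp : HasCompactSupport (fun p => χ p * G p) := by
      apply HasCompactSupport.intro (isCompact_closedBall (0 : ℝ × ℝ) (2*R))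
      intro p hp
      have h2R : 2*R < ‖p‖ := by
        rw [mem_closedBall_zero_iff, not_le] at hp
        exact hp
      obtain ⟨z0, z1, z2, z3⟩ := hflat_out p h2R
      show χ p * G p = 0
      rw [z0, zero_mul]
    have hχG_int : Integrable (fun p => χ p * G p) :=
      (hχcont.mul hGcont).integrable_of_hasCompactSupport hχG_supp
    have hsum : ∫ p : ℝ × ℝ, (d1 S1 p + d2 S2 p)
        = (∫ p : ℝ × ℝ, χ p * G p) - ∫ p : ℝ × ℝ, err p := by
      rw [show (fun p : ℝ × ℝ => d1 S1 p + d2 S2 p) = fun p => χ p * G p - err p from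
        funext hdiv]
      exact integral_sub hχG_int herr_int
    have heq1 : ∫ p : ℝ × ℝ, χ p * G p = ∫ p : ℝ × ℝ, err p := by
      have := hsum.symm.trans hzero
      linarith [this]
    have hMerr : ∀ p : ℝ × ℝ, |err p| ≤ K / R^3 := by
      intro p
      rcases lt_or_ge ‖p‖ R with hpR | hpR
      · obtain ⟨z1, z2, z3⟩ := hflat_in p hpR
        have : err p = 0 := by
          show phi p * v p * lχ p + 2 * v p * (phi1 p * χ1 p + phi2 p * χ2 p) = 0
          rw [z1, z2, z3]; ring
        rw [this, abs_zero]
        positivity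
      · rcases le_or_gt ‖p‖ (2*R) with hp2 | hp2
        · have hqR : R^2 ≤ qq p := by
            have h1 : R^2 ≤ ‖p‖^2 := by
              have := norm_nonneg p
              nlinarith
            linarith [qq_ge_norm p]
          have hq0 : (0:ℝ) < qq p := qq_pos p
          have hphib : |phi p| ≤ 16 / R^2 := by
            rw [show phi p = 16 / qq p from rfl, abs_of_pos (by positivity)]
            gcongr
          have hvpb : |v p| ≤ 3 * Cv * R := by
            refine (hvb p).trans ?_
            nlinarith
          have hp1 : |p.1| ≤ ‖p‖ := by
            rw [show ‖p‖ = max ‖p.1‖ ‖p.2‖ from rfl, Real.norm_eq_abs, Real.norm_eq_abs]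
            exact le_max_left _ _
          have hp2' : |p.2| ≤ ‖p‖ := by
            rw [show ‖p‖ = max ‖p.1‖ ‖p.2‖ from rfl, Real.norm_eq_abs, Real.norm_eq_abs]
            exact le_max_right _ _
          have hphi1b : |phi1 p| ≤ 64 / R^3 := by
            have h1 : |phi1 p| = 32 * |p.1| / qq p^2 := by
              rw [show phi1 p = -32 * p.1 / qq p ^ 2 from rfl, abs_div, abs_mul]
              rw [abs_of_pos (by positivity : (0:ℝ) < qq p ^ 2)]
              norm_num
            rw [h1]
            calc 32 * |p.1| / qq p^2 ≤ 64 * R / (R^2)^2 := by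
                  have hn1 : 32 * |p.1| ≤ 64 * R := by
                    have := hp1.trans hp2
                    linarith [abs_nonneg p.1]
                  have hd1 : (R^2)^2 ≤ (qq p)^2 := by nlinarith
                  gcongr
              _ = 64 / R^3 := by field_simp
          have hphi2b : |phi2 p| ≤ 64 / R^3 := by
            have h1 : |phi2 p| = 32 * |p.2| / qq p^2 := by
              rw [show phi2 p = -32 * p.2 / qq p ^ 2 from rfl, abs_div, abs_mul]
              rw [abs_of_pos (by positivity : (0:ℝ) < qq p ^ 2)]
              norm_num
            rw [h1]
            calc 32 * |p.2| / qq p^2 ≤ 64 * R / (R^2)^2 := by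
                  have hn1 : 32 * |p.2| ≤ 64 * R := by
                    have := hp2'.trans hp2
                    linarith [abs_nonneg p.2]
                  have hd1 : (R^2)^2 ≤ (qq p)^2 := by nlinarith
                  gcongr
              _ = 64 / R^3 := by field_simp
          have hX1 : |d1 B (c • p)| ≤ M1 := by
            rw [← Real.norm_eq_abs]; exact hM1 _
          have hX2 : |d2 B (c • p)| ≤ M1' := by
            rw [← Real.norm_eq_abs]; exact hM1' _
          have hY1 : |d1 (d1 B) (c • p)| ≤ M2 := by
            rw [← Real.norm_eq_abs]; exact hM2 _
          have hY2 : |d2 (d2 B) (c • p)| ≤ M2' := by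
            rw [← Real.norm_eq_abs]; exact hM2' _
          have hχ1b : |χ1 p| ≤ M1 / R := by
            show |c * d1 B (c • p)| ≤ M1 / R
            calc |c * d1 B (c • p)| = c * |d1 B (c • p)| := by
                  rw [abs_mul, abs_of_pos hc0]
              _ ≤ c * M1 := mul_le_mul_of_nonneg_left hX1 hc0.le
              _ = M1 / R := by rw [hcdef, inv_mul_eq_div]
          have hχ2b : |χ2 p| ≤ M1' / R := by
            show |c * d2 B (c • p)| ≤ M1' / R
            calc |c * d2 B (c • p)| = c * |d2 B (c • p)| := by
                  rw [abs_mul, abs_of_pos hc0]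
              _ ≤ c * M1' := mul_le_mul_of_nonneg_left hX2 hc0.le
              _ = M1' / R := by rw [hcdef, inv_mul_eq_div]
          have hlχb : |lχ p| ≤ (M2 + M2') / R^2 := by
            show |c * (c * d1 (d1 B) (c • p)) + c * (c * d2 (d2 B) (c • p))| ≤ (M2 + M2') / R^2
            refine (abs_add_le _ _).trans ?_
            have e1 : |c * (c * d1 (d1 B) (c • p))| = c * (c * |d1 (d1 B) (c • p)|) := by
              rw [abs_mul, abs_mul, abs_of_pos hc0]
            have e2 : |c * (c * d2 (d2 B) (c • p))| = c * (c * |d2 (d2 B) (c • p)|) := by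
              rw [abs_mul, abs_mul, abs_of_pos hc0]
            rw [e1, e2]
            have h1 : c * (c * |d1 (d1 B) (c • p)|) ≤ c * (c * M2) := by
              apply mul_le_mul_of_nonneg_left _ hc0.le
              exact mul_le_mul_of_nonneg_left hY1 hc0.le
            have h2 : c * (c * |d2 (d2 B) (c • p)|) ≤ c * (c * M2') := by
              apply mul_le_mul_of_nonneg_left _ hc0.le
              exact mul_le_mul_of_nonneg_left hY2 hc0.le
            have he : c * (c * M2) + c * (c * M2') = (M2 + M2') / R^2 := by
              rw [hcdef, div_eq_mul_inv, pow_two, mul_inv]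
              ring
            linarith
          have habs1 : |phi p * v p * lχ p| ≤ (16/R^2) * (3*Cv*R) * ((M2+M2')/R^2) := by
            rw [abs_mul, abs_mul]
            gcongr
          have habs2 : |2 * v p * (phi1 p * χ1 p + phi2 p * χ2 p)|
              ≤ 2 * (3*Cv*R) * ((64/R^3)*(M1/R) + (64/R^3)*(M1'/R)) := by
            rw [abs_mul, abs_mul, abs_two]
            have hin : |phi1 p * χ1 p + phi2 p * χ2 p|
                ≤ (64/R^3)*(M1/R) + (64/R^3)*(M1'/R) := by
              have t1 : |phi1 p * χ1 p| ≤ (64/R^3)*(M1/R) := by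
                rw [abs_mul]
                exact mul_le_mul hphi1b hχ1b (abs_nonneg _) (by positivity)
              have t2 : |phi2 p * χ2 p| ≤ (64/R^3)*(M1'/R) := by
                rw [abs_mul]
                exact mul_le_mul hphi2b hχ2b (abs_nonneg _) (by positivity)
              exact (abs_add_le _ _).trans (add_le_add t1 t2)
            gcongr
          have hsum1 : |err p| ≤ (16/R^2) * (3*Cv*R) * ((M2+M2')/R^2)
              + 2 * (3*Cv*R) * ((64/R^3)*(M1/R) + (64/R^3)*(M1'/R)) := by
            refine (abs_add_le _ _).trans ?_
            exact add_le_add habs1 habs2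
          refine hsum1.trans ?_
          have hexp1 : (16/R^2) * (3*Cv*R) * ((M2+M2')/R^2) = 48*Cv*(M2+M2')/R^3 := by
            field_simp <;> ring
          have hexp2 : 2 * (3*Cv*R) * ((64/R^3)*(M1/R) + (64/R^3)*(M1'/R))
              = 384*Cv*(M1+M1')/R^3 := by
            field_simp <;> ring
          rw [hexp1, hexp2, hKdef]
          have hsplit : (48 * Cv * (M2 + M2') + 384 * Cv * (M1 + M1')) / R ^ 3
              = 48*Cv*(M2+M2')/R^3 + 384*Cv*(M1+M1')/R^3 := by ring
          rw [hsplit]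
        · obtain ⟨z0, z1, z2, z3⟩ := hflat_out p hp2
          have : err p = 0 := by
            show phi p * v p * lχ p + 2 * v p * (phi1 p * χ1 p + phi2 p * χ2 p) = 0
            rw [z1, z2, z3]; ring
          rw [this, abs_zero]
          positivity
    have herr_van : ∀ p : ℝ × ℝ,
        p ∉ Icc ((-(2*R), -(2*R)) : ℝ × ℝ) ((2*R, 2*R) : ℝ × ℝ) → err p = 0 := by
      intro p hp
      obtain ⟨z0, z1, z2, z3⟩ := hflat_out p (hnormIcc p hp)
      show phi p * v p * lχ p + 2 * v p * (phi1 p * χ1 p + phi2 p * χ2 p) = 0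
      rw [z1, z2, z3]; ring
    have hbnd := abs_integral_le err herr_cont.aestronglyMeasurable (K / R^3) (2*R)
      (by linarith) hMerr herr_van
    show |∫ p : ℝ × ℝ, χ p * G p| ≤ 16 * K / R
    rw [heq1]
    refine hbnd.trans (le_of_eq ?_)
    field_simp <;> ring
  have hlim1 : Tendsto (fun n : ℕ => ∫ p : ℝ × ℝ, B ((((n:ℝ)+1)⁻¹) • p) * G p) atTop
      (𝓝 (∫ p : ℝ × ℝ, G p)) := by
    apply tendsto_integral_of_dominated_convergence (bound := fun p => |G p|)
    · intro n
      exact ((B_contDiff.continuous.comp (continuous_id.const_smul (((n:ℝ)+1)⁻¹))).mul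
        hGcont).aestronglyMeasurable
    · exact hG.abs
    · intro n
      filter_upwards with p
      rw [Real.norm_eq_abs, abs_mul]
      have h1 : |B ((((n:ℝ)+1)⁻¹) • p)| ≤ 1 := by
        have h0 : (0:ℝ) ≤ B ((((n:ℝ)+1)⁻¹) • p) := bb.nonneg
        rw [abs_of_nonneg h0]
        exact bb.le_one
      nlinarith [abs_nonneg (G p), abs_nonneg (B ((((n:ℝ)+1)⁻¹) • p))]
    · filter_upwards with p
      have hev : ∀ᶠ n : ℕ in atTop, B ((((n:ℝ)+1)⁻¹) • p) * G p = G p := by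
        filter_upwards [eventually_ge_atTop ⌈‖p‖⌉₊] with n hn
        have hRp : ‖p‖ ≤ (n:ℝ)+1 := by
          refine (Nat.le_ceil _).trans ?_
          have : (⌈‖p‖⌉₊ : ℝ) ≤ (n:ℝ) := by exact_mod_cast hn
          linarith
        have hmem : (((n:ℝ)+1)⁻¹) • p ∈ closedBall (0 : ℝ × ℝ) bb.rIn := by
          rw [mem_closedBall_zero_iff, norm_smul, Real.norm_eq_abs]
          have hn0 : (0:ℝ) < (n:ℝ)+1 := by positivity
          rw [abs_of_pos (inv_pos.2 hn0)]
          show ((n:ℝ)+1)⁻¹ * ‖p‖ ≤ 1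
          rw [inv_mul_le_iff₀ hn0, mul_one]
          exact hRp
        have : B ((((n:ℝ)+1)⁻¹) • p) = 1 := bb.one_of_mem_closedBall hmem
        rw [this, one_mul]
      exact Tendsto.congr' (by filter_upwards [hev] with n h; exact h.symm) tendsto_const_nhds
  have hlim2 : Tendsto (fun n : ℕ => ∫ p : ℝ × ℝ, B ((((n:ℝ)+1)⁻¹) • p) * G p) atTop (𝓝 0) := by
    have hkey' : ∀ n : ℕ, ‖∫ p : ℝ × ℝ, B ((((n:ℝ)+1)⁻¹) • p) * G p‖ ≤ 16 * K / ((n:ℝ)+1) := by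
      intro n
      rw [Real.norm_eq_abs]
      exact key n
    apply squeeze_zero_norm hkey'
    have h1 : Tendsto (fun n : ℕ => 16 * K * (1 / ((n:ℝ)+1))) atTop (𝓝 (16 * K * 0)) :=
      tendsto_one_div_add_atTop_nhds_zero_nat.const_mul (16*K)
    rw [mul_zero] at h1
    refine h1.congr fun n => ?_
    rw [mul_one_div]
  exact tendsto_nhds_unique hlim1 hlim2

lemma abs_fst_le (p : ℝ × ℝ) : |p.1| ≤ ‖p‖ := by
  rw [show ‖p‖ = max ‖p.1‖ ‖p.2‖ from rfl, Real.norm_eq_abs, Real.norm_eq_abs]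
  exact le_max_left _ _

lemma abs_snd_le (p : ℝ × ℝ) : |p.2| ≤ ‖p‖ := by
  rw [show ‖p‖ = max ‖p.1‖ ‖p.2‖ from rfl, Real.norm_eq_abs, Real.norm_eq_abs]
  exact le_max_right _ _

lemma phi_abs_le_two (p : ℝ × ℝ) : |phi p| ≤ 2 := by
  have hq := qq_ge8 p
  have hq0 := qq_pos p
  rw [show phi p = 16 / qq p from rfl, abs_of_pos (by positivity)]
  rw [div_le_iff₀ hq0]
  linarith

lemma cont_gg : Continuous gg := by
  refine Continuous.div ?_ ((contDiff_qq.continuous).pow 2)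
    (fun p => pow_ne_zero 2 (qq_pos p).ne') 
  refine continuous_const.mul (Continuous.pow ?_ 2)
  refine Continuous.log (contDiff_qq.continuous.div_const 8) ?_
  intro p
  have := qq_pos p
  positivity

lemma phigg_decay (p : ℝ × ℝ) : |phi p * gg p| ≤ 16384 / (1 + ‖p‖) ^ 3 := by
  rw [abs_mul]
  calc |phi p| * |gg p| ≤ 2 * (8192 / (1 + ‖p‖) ^ 3) :=
        mul_le_mul (phi_abs_le_two p) (gg_decay p) (abs_nonneg _) (by norm_num)
    _ = 16384 / (1 + ‖p‖) ^ 3 := by ring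

end W0Aux

open W0Aux in
theorem integral_laplacian_w0 (w₀ : EuclideanSpace ℝ (Fin 2) → ℝ) (hw : ContDiff ℝ 2 w₀)
    (C τ : ℝ) (hτ : τ ∈ Set.Ioo (0:ℝ) 1)
    (hbound : ∀ x : EuclideanSpace ℝ (Fin 2), |w₀ x| ≤ C * (1 + ‖x‖) ^ τ)
    (heq : ∀ x : EuclideanSpace ℝ (Fin 2),
      -lap2 w₀ x - Real.exp (U2 x) * w₀ x = -(U2 x ^ 2 / 2) * Real.exp (U2 x)) :
    ∫ x : EuclideanSpace ℝ (Fin 2), lap2 w₀ x = 24 * π := by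
  obtain ⟨hτ0, hτ1⟩ := hτ
  have hC0 : 0 ≤ C := by
    have h := hbound 0
    have h0 : (1 + ‖(0 : EuclideanSpace ℝ (Fin 2))‖) = 1 := by simp
    rw [h0, Real.one_rpow, mul_one] at h
    exact (abs_nonneg _).trans h
  set v : ℝ × ℝ → ℝ := fun p => w₀ (eL p) with hvdef
  have hv : ContDiff ℝ 2 v := hw.comp eL.contDiff
  have hnormle : ∀ p : ℝ × ℝ, ‖eL p‖ ≤ 2 * ‖p‖ := by
    intro p
    have h1 : ‖eL p‖ ^ 2 = p.1 ^ 2 + p.2 ^ 2 := norm_eL_sq p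
    have h2 : p.1 ^ 2 + p.2 ^ 2 ≤ (2 * ‖p‖) ^ 2 := by
      nlinarith [abs_fst_le p, abs_snd_le p, sq_abs p.1, sq_abs p.2, norm_nonneg p,
        abs_nonneg p.1, abs_nonneg p.2]
    nlinarith [norm_nonneg (eL p), norm_nonneg p]
  have hvb : ∀ p : ℝ × ℝ, |v p| ≤ (2 * C) * (1 + ‖p‖) := by
    intro p
    have h1 := hbound (eL p)
    have hbase : (1:ℝ) ≤ 1 + ‖eL p‖ := by linarith [norm_nonneg (eL p)]
    have h2 : (1 + ‖eL p‖) ^ τ ≤ (1 + ‖eL p‖) ^ (1:ℝ) :=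
      Real.rpow_le_rpow_of_exponent_le hbase hτ1.le
    rw [Real.rpow_one] at h2
    have h3 : |v p| ≤ C * (1 + ‖eL p‖) :=
      h1.trans (mul_le_mul_of_nonneg_left h2 hC0)
    refine h3.trans ?_
    have h4 := hnormle p
    have h5 := norm_nonneg p
    nlinarith
  have hlapP : ∀ p : ℝ × ℝ, lapP v p = gg p - 64 / qq p ^ 2 * v p := by
    intro p
    have hq0 := qq_pos p
    have heqp := heq (eL p)
    have hU : U2 (eL p) = -2 * Real.log (qq p / 8) := by
      rw [U2, norm_eL_sq p]
      congr 2
      rw [show qq p = 8 + p.1 ^ 2 + p.2 ^ 2 from rfl]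
      ring
    have hqq8 : (0:ℝ) < qq p / 8 := by positivity
    have hexp : Real.exp (U2 (eL p)) = 64 / qq p ^ 2 := by
      rw [hU, show (-2 : ℝ) * Real.log (qq p / 8)
          = -Real.log (qq p / 8) + -Real.log (qq p / 8) by ring,
        Real.exp_add, Real.exp_neg, Real.exp_log hqq8]
      field_simp <;> ring
    have hgg : U2 (eL p) ^ 2 / 2 * Real.exp (U2 (eL p)) = gg p := by
      rw [hexp, hU, show gg p = 128 * (Real.log (qq p / 8)) ^ 2 / qq p ^ 2 from rfl]
      field_simp <;> ring
    have hlin : lap2 w₀ (eL p) = U2 (eL p) ^ 2 / 2 * Real.exp (U2 (eL p))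
        - Real.exp (U2 (eL p)) * w₀ (eL p) := by nlinarith [heqp]
    calc lapP v p = lap2 w₀ (eL p) := lap_transfer w₀ hw p
      _ = U2 (eL p) ^ 2 / 2 * Real.exp (U2 (eL p))
          - Real.exp (U2 (eL p)) * w₀ (eL p) := hlin
      _ = gg p - 64 / qq p ^ 2 * v p := by rw [hgg, hexp]
  have hcont_vterm : Continuous (fun p : ℝ × ℝ => 64 / qq p ^ 2 * v p) := by
    refine Continuous.mul ?_ hv.continuous
    exact Continuous.div continuous_const ((contDiff_qq.continuous).pow 2)
      (fun p => pow_ne_zero 2 (qq_pos p).ne')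
  have hvterm_decay : ∀ p : ℝ × ℝ, |64 / qq p ^ 2 * v p| ≤ 512 * C / (1 + ‖p‖) ^ 3 := by
    intro p
    have hq0 := qq_pos p
    have hn0 := norm_nonneg p
    have h2q := one_add_norm_sq_le p
    have h4 : (1 + ‖p‖) ^ 4 ≤ 4 * qq p ^ 2 := by nlinarith
    rw [abs_mul, abs_of_pos (show (0:ℝ) < 64 / qq p ^ 2 by positivity)]
    have h5 : 64 / qq p ^ 2 * |v p| ≤ 64 / qq p ^ 2 * ((2 * C) * (1 + ‖p‖)) :=
      mul_le_mul_of_nonneg_left (hvb p) (by positivity)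
    refine h5.trans ?_
    rw [div_mul_eq_mul_div, div_le_div_iff₀ (by positivity) (by positivity)]
    nlinarith [mul_le_mul_of_nonneg_left h4 (show (0:ℝ) ≤ 128 * C by positivity)]
  have hint_vterm : Integrable (fun p : ℝ × ℝ => 64 / qq p ^ 2 * v p) :=
    integrable_decay (512 * C) _ hcont_vterm hvterm_decay
  have hint_gg : Integrable gg := integrable_decay 8192 _ cont_gg gg_decay
  have hint_phigg : Integrable (fun p : ℝ × ℝ => phi p * gg p) :=
    integrable_decay 16384 _ ((contDiff_phi.continuous).mul cont_gg) phigg_decay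
  have hpoint : (fun p : ℝ × ℝ => phi p * lapP v p - v p * lapP phi p)
      = fun p : ℝ × ℝ => phi p * gg p - 64 / qq p ^ 2 * v p := by
    funext p
    rw [hlapP p, lapP_phi p]
    ring
  have hG : Integrable (fun p : ℝ × ℝ => phi p * lapP v p - v p * lapP phi p) := by
    rw [hpoint]
    exact hint_phigg.sub hint_vterm
  have hgreen := green_phi v hv (2 * C) (by linarith) hvb hG
  rw [hpoint, integral_sub hint_phigg hint_vterm, int_phigg] at hgreen
  have hEU : ∫ p : ℝ × ℝ, 64 / qq p ^ 2 * v p = 8 * π := by linarith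
  rw [integral_transfer (lap2 w₀)]
  have hl : (fun p : ℝ × ℝ => lap2 w₀ (eL p))
      = fun p : ℝ × ℝ => gg p - 64 / qq p ^ 2 * v p := by
    funext p
    calc lap2 w₀ (eL p) = lapP v p := (lap_transfer w₀ hw p).symm
      _ = gg p - 64 / qq p ^ 2 * v p := hlapP p
  rw [hl, integral_sub hint_gg hint_vterm, int_gg, hEU]
  ring
end
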